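/- arXiv:math/0304429 — 6 statements merged into one kernel-verified Lean document; each statement's English description precedes it below -/
import Mathlib

section
/- The statistics 'last descent' and 'last index minus one' are equidistributed over the set of 321-avoiding permutations of order n; that is, the number of 321-avoiding permutations π in S_n with ldes(π) = k equals the number with lind(π) - 1 = k, for every k. -/
open Finset

/-- A permutation is 321-avoiding if it has no decreasing subsequence of length 3. -/
def Avoids321 {n : ℕ} (π : Equiv.Perm (Fin n)) : Prop :=
  ¬ ∃ i j k : Fin n, i < j ∧ j < k ∧ π k < π j ∧ π j < π i

instance {n : ℕ} : DecidablePred (Avoids321 (n := n)) := fun π =>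
  decidable_of_iff (¬ ∃ i j k : Fin n, i < j ∧ j < k ∧ π k < π j ∧ π j < π i) Iff.rfl

/-- The set `T_n` of 321-avoiding permutations of order `n`. -/
def Tset (n : ℕ) : Finset (Equiv.Perm (Fin n)) :=
  Finset.univ.filter (fun π => Avoids321 π)

/-- The value `π(i)` in one-based notation: positions `1,…,n`, values `1,…,n`. -/
def pval {n : ℕ} (π : Equiv.Perm (Fin n)) (i : ℕ) : ℕ :=
  if h : i - 1 < n then (π ⟨i - 1, h⟩ : ℕ) + 1 else 0

/-- The descent set `Des(π) = {1 ≤ i ≤ n-1 : π(i) > π(i+1)}` (one-based). -/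
def desSet {n : ℕ} (π : Equiv.Perm (Fin n)) : Finset ℕ :=
  (Finset.Icc 1 (n - 1)).filter (fun i => pval π (i + 1) < pval π i)

/-- The last descent of `π` (0 for the identity). -/
def ldes {n : ℕ} (π : Equiv.Perm (Fin n)) : ℕ := (desSet π).sup id

/-- `lind(π) = π⁻¹(n)`, the (one-based) position of the letter `n` in `π`. -/
def lind {n : ℕ} (π : Equiv.Perm (Fin n)) : ℕ := pval π.symm n

/-- The inversion number of `π`. -/
def invNum {n : ℕ} (π : Equiv.Perm (Fin n)) : ℕ :=
  (Finset.univ.filter (fun q : Fin n × Fin n => q.1 < q.2 ∧ π q.2 < π q.1)).card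

/-- A ±1 sequence of length `2n` (`true` = +1) is a Dyck path if it has `n` up
steps and every prefix has at least as many up steps as down steps. -/
def IsDyckPred (n : ℕ) (p : Fin (2 * n) → Bool) : Prop :=
  (Finset.univ.filter (fun i => p i = true)).card = n ∧
  ∀ k ≤ 2 * n,
    k ≤ 2 * (Finset.univ.filter (fun i : Fin (2 * n) => (i : ℕ) < k ∧ p i = true)).card

instance (n : ℕ) : DecidablePred (IsDyckPred n) := fun p => by
  unfold IsDyckPred; infer_instance

/-- The set `P_n` of Dyck paths of length `2n`. -/
def DyckPath (n : ℕ) : Type := { p : Fin (2 * n) → Bool // IsDyckPred n p }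

instance (n : ℕ) : Fintype (DyckPath n) := by unfold DyckPath; infer_instance

/-- The `i`-th step of the path, one-based; `true` = +1, `false` = -1. -/
def pstep {n : ℕ} (p : DyckPath n) (i : ℕ) : Bool :=
  if h : i - 1 < 2 * n then p.1 ⟨i - 1, h⟩ else false

/-- `Des(p) = {1 ≤ i ≤ n-1 : p_i = +1, p_{i+1} = -1}`. -/
def pathDes {n : ℕ} (p : DyckPath n) : Finset ℕ :=
  (Finset.Icc 1 (n - 1)).filter (fun i => pstep p i = true ∧ pstep p (i + 1) = false)

/-- `Des(p⁻¹) = {1 ≤ i ≤ n-1 : p_{2n-i} = +1, p_{2n-i+1} = -1}`. -/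
def pathDesInv {n : ℕ} (p : DyckPath n) : Finset ℕ :=
  (Finset.Icc 1 (n - 1)).filter
    (fun i => pstep p (2 * n - i) = true ∧ pstep p (2 * n - i + 1) = false)

/-- `ldes(p) = max{1 ≤ i ≤ n-1 : p_i = +1, p_{i+1} = -1}` (0 if none). -/
def pathLdes {n : ℕ} (p : DyckPath n) : ℕ := (pathDes p).sup id

/-- `lind(p) = max{1 ≤ i ≤ n : p_i = +1, p_{i+1} = -1}` (0 if none). -/
def pathLind {n : ℕ} (p : DyckPath n) : ℕ :=
  ((Finset.Icc 1 n).filter (fun i => pstep p i = true ∧ pstep p (i + 1) = false)).sup id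

/-- `tail(p) = 2n - max{i : p_i = +1, p_{i+1} = -1}`, the number of consecutive
down steps at the end of `p`. -/
def pathTail {n : ℕ} (p : DyckPath n) : ℕ :=
  2 * n -
    ((Finset.Icc 1 (2 * n - 1)).filter
      (fun i => pstep p i = true ∧ pstep p (i + 1) = false)).sup id


/-! ### Auxiliary development for the proof -/

namespace LdesLindAux

open Equiv

variable {n : ℕ}

lemma fl1 {i : ℕ} (h : i < n) : i - 1 < n := Nat.lt_of_le_of_lt (Nat.sub_le i 1) h

lemma fl2 {i : ℕ} (h : i < n) (h2 : i ≠ n - 1) : i + 1 < n := by omega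

lemma fl3 (hn : 0 < n) : n - 1 < n := Nat.sub_lt hn Nat.one_pos

lemma fl4 {a b : ℕ} (hab : a < b) (hb : b < n) : a < n := Nat.lt_trans hab hb

/-- The largest element of `Fin n` (requires `0 < n`). -/
def topF (hn : 0 < n) : Fin n := ⟨n - 1, fl3 hn⟩

lemma le_top (hn : 0 < n) (x : Fin n) : x ≤ topF hn := by
  rw [Fin.le_def]; have := x.isLt; simp only [topF]; omega

lemma lt_top_of_ne (hn : 0 < n) {x : Fin n} (hx : x ≠ topF hn) : x < topF hn :=
  lt_of_le_of_ne (le_top hn x) hx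

lemma no321 {π : Equiv.Perm (Fin n)} (hπ : Avoids321 π) {a b c : Fin n}
    (hab : a < b) (hbc : b < c) (h1 : π c < π b) (h2 : π b < π a) : False :=
  hπ ⟨a, b, c, hab, hbc, h1, h2⟩

lemma symm_top_eq (hn : 0 < n) {π : Equiv.Perm (Fin n)} {x : Fin n}
    (hx : π x = topF hn) : π.symm (topF hn) = x := by
  rw [← hx, Equiv.symm_apply_apply]

/-- Values after the position of the maximum are increasing. -/
lemma incr_after (hn : 0 < n) {π : Equiv.Perm (Fin n)} (hπ : Avoids321 π)
    {i j : Fin n} (hi : π.symm (topF hn) < i) (hij : i < j) : π i < π j := by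
  by_contra hle
  push_neg at hle
  have hne : π j ≠ π i := fun h => absurd (π.injective h) (ne_of_gt hij)
  have h1 : π j < π i := lt_of_le_of_ne hle hne
  have hine : π i ≠ topF hn := by
    intro h
    have := symm_top_eq hn h
    exact absurd this (ne_of_lt hi)
  have h2 : π i < topF hn := lt_top_of_ne hn hine
  rw [← π.apply_symm_apply (topF hn)] at h2
  exact no321 hπ hi hij h1 h2

lemma mem_desSet_iff (π : Equiv.Perm (Fin n)) (i : ℕ) (h1 : 1 ≤ i) (hi : i < n) :
    i ∈ desSet π ↔ π ⟨i, hi⟩ < π ⟨i - 1, fl1 hi⟩ := by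
  unfold desSet pval
  rw [Finset.mem_filter, Finset.mem_Icc]
  rw [dif_pos (show i + 1 - 1 < n by omega), dif_pos (show i - 1 < n by omega)]
  simp only [show i + 1 - 1 = i from rfl]
  constructor
  · rintro ⟨-, h⟩; rw [Fin.lt_def]; omega
  · intro h; rw [Fin.lt_def] at h; exact ⟨⟨h1, by omega⟩, by omega⟩

lemma of_mem_desSet {π : Equiv.Perm (Fin n)} {i : ℕ} (h : i ∈ desSet π) :
    1 ≤ i ∧ i < n := by
  unfold desSet at h
  rw [Finset.mem_filter, Finset.mem_Icc] at h
  omega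

lemma ldes_eq_of {π : Equiv.Perm (Fin n)} {k : ℕ}
    (h1 : ∀ j ∈ desSet π, j ≤ k) (h2 : k = 0 ∨ k ∈ desSet π) : ldes π = k := by
  unfold ldes
  refine le_antisymm (Finset.sup_le h1) ?_
  rcases h2 with h2 | h2
  · omega
  · exact Finset.le_sup (f := id) h2

lemma of_ldes_eq {π : Equiv.Perm (Fin n)} {k : ℕ} (h : ldes π = k) :
    (∀ j ∈ desSet π, j ≤ k) ∧ (k = 0 ∨ k ∈ desSet π) := by
  subst h
  refine ⟨fun j hj => Finset.le_sup (f := id) hj, ?_⟩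
  rcases Finset.eq_empty_or_nonempty (desSet π) with he | he
  · left; unfold ldes; rw [he]; rfl
  · right
    obtain ⟨b, hb, hbe⟩ := Finset.exists_mem_eq_sup _ he id
    unfold ldes; rw [hbe]; exact hb

lemma ldes_lt (hn : 0 < n) (π : Equiv.Perm (Fin n)) : ldes π < n := by
  have : ldes π ≤ n - 1 := Finset.sup_le fun j hj => by
    have := of_mem_desSet hj; simp only [id_eq]; omega
  omega

lemma lind_eq (hn : 0 < n) (π : Equiv.Perm (Fin n)) :
    lind π = (π.symm (topF hn) : ℕ) + 1 := by
  unfold lind pval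
  rw [dif_pos (show n - 1 < n by omega)]
  rfl

lemma lind_le (hn : 0 < n) (π : Equiv.Perm (Fin n)) : 1 ≤ lind π ∧ lind π ≤ n := by
  rw [lind_eq hn]
  have := (π.symm (topF hn)).isLt
  omega

/-- If the maximum is not in the last position, `ldes = lind`. -/
lemma ldes_eq_lind (hn : 0 < n) {π : Equiv.Perm (Fin n)} (hπ : Avoids321 π)
    (h : lind π < n) : ldes π = lind π := by
  set P : Fin n := π.symm (topF hn) with hP
  have hle : lind π = (P : ℕ) + 1 := lind_eq hn π
  have hPlt : (P : ℕ) + 1 < n := by omega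
  have hmem : (P : ℕ) + 1 ∈ desSet π := by
    rw [mem_desSet_iff π _ (by omega) hPlt]
    have hx : (⟨(P : ℕ) + 1 - 1, fl1 hPlt⟩ : Fin n) = P := Fin.ext (by simp)
    rw [hx]
    have hPtop : π P = topF hn := by rw [hP]; exact π.apply_symm_apply _
    rw [hPtop]
    apply lt_top_of_ne hn
    intro hcon
    have h2 := symm_top_eq hn hcon
    rw [← hP] at h2
    have h3 := congrArg Fin.val h2
    simp at h3
  apply ldes_eq_of
  · intro j hj
    by_contra hgt
    push_neg at hgt
    obtain ⟨hj1, hjn⟩ := of_mem_desSet hj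
    rw [mem_desSet_iff π j hj1 hjn] at hj
    have : π ⟨j - 1, fl1 hjn⟩ < π ⟨j, hjn⟩ := by
      apply incr_after hn hπ
      · rw [← hP, Fin.lt_def]; simp; omega
      · rw [Fin.lt_def]; simp; omega
    exact absurd hj (asymm this)
  · right; rw [hle]; exact hmem

/-- No descents from one-based position `t+1` on implies increasing from
zero-based index `t` on. -/
lemma chain_mono (π : Equiv.Perm (Fin n)) (t : ℕ)
    (hstep : ∀ m : ℕ, t ≤ m → ∀ h : m + 1 < n,
      π ⟨m, fl4 (Nat.lt_succ_self m) h⟩ < π ⟨m + 1, h⟩) :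
    ∀ a b : ℕ, t ≤ a → ∀ (hab : a < b) (hb : b < n),
      π ⟨a, fl4 hab hb⟩ < π ⟨b, hb⟩ := by
  intro a b hta hab hb
  induction b with
  | zero => omega
  | succ m ih =>
    rcases Nat.lt_or_ge a m with hm | hm
    · exact lt_trans (ih hm (by omega)) (hstep m (by omega) hb)
    · have : a = m := by omega
      subst this
      exact hstep a hta hb

/-! #### The cycle moving position `p` to the end -/

def cf (p : Fin n) (x : Fin n) : Fin n :=
  if (x : ℕ) < p then x
  else if h2 : (x : ℕ) = n - 1 then p
  else ⟨(x : ℕ) + 1, fl2 x.isLt h2⟩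

def cg (p : Fin n) (x : Fin n) : Fin n :=
  if (x : ℕ) < p then x
  else if h2 : (x : ℕ) = (p : ℕ) then ⟨n - 1, fl3 x.pos⟩
  else ⟨(x : ℕ) - 1, fl1 x.isLt⟩

lemma cf_lt {p x : Fin n} (h : (x : ℕ) < p) : cf p x = x := by
  simp [cf, h]

lemma cf_last {p x : Fin n} (h : ¬ (x : ℕ) < p) (h2 : (x : ℕ) = n - 1) :
    cf p x = p := by simp only [cf]; rw [if_neg h, dif_pos h2]

lemma cf_mid {p x : Fin n} (h : ¬ (x : ℕ) < p) (h2 : (x : ℕ) ≠ n - 1) :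
    cf p x = ⟨(x : ℕ) + 1, fl2 x.isLt h2⟩ := by
  simp [cf, h, h2]

lemma cg_lt {p x : Fin n} (h : (x : ℕ) < p) : cg p x = x := by
  simp [cg, h]

lemma cg_eq {p x : Fin n} (h2 : (x : ℕ) = (p : ℕ)) :
    cg p x = ⟨n - 1, fl3 x.pos⟩ := by
  simp [cg, h2]

lemma cg_gt {p x : Fin n} (h : (p : ℕ) < x) :
    cg p x = ⟨(x : ℕ) - 1, fl1 x.isLt⟩ := by
  have h1 : ¬ (x : ℕ) < p := by omega
  have h2 : (x : ℕ) ≠ (p : ℕ) := by omega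
  simp [cg, h1, h2]

lemma cg_cf (p : Fin n) (x : Fin n) : cg p (cf p x) = x := by
  have hx := x.isLt
  have hp := p.isLt
  by_cases h1 : (x : ℕ) < p
  · rw [cf_lt h1, cg_lt h1]
  · by_cases h2 : (x : ℕ) = n - 1
    · rw [cf_last h1 h2, cg_eq rfl]
      exact Fin.ext (by simp; omega)
    · rw [cf_mid h1 h2, cg_gt (by simp; omega)]
      exact Fin.ext (by simp)

lemma cf_cg (p : Fin n) (x : Fin n) : cf p (cg p x) = x := by
  have hx := x.isLt
  have hp := p.isLt
  by_cases h1 : (x : ℕ) < p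
  · rw [cg_lt h1, cf_lt h1]
  · by_cases h2 : (x : ℕ) = (p : ℕ)
    · rw [cg_eq h2, cf_last (by simp; omega) (by simp)]
      exact Fin.ext (by omega)
    · rw [cg_gt (by omega), cf_mid (by simp; omega) (by simp; omega)]
      exact Fin.ext (by simp; omega)

def cyc (p : Fin n) : Equiv.Perm (Fin n) := ⟨cf p, cg p, cg_cf p, cf_cg p⟩

lemma cyc_apply (p x : Fin n) : cyc p x = cf p x := rfl

lemma cyc_symm_apply (p x : Fin n) : (cyc p)⁻¹ x = cg p x := rfl

lemma cf_mono {p x y : Fin n} (hxy : (x : ℕ) < y) (hy : (y : ℕ) ≠ n - 1) :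
    cf p x < cf p y := by
  have hxn := x.isLt
  have hyn := y.isLt
  have hpn := p.isLt
  have hx : (x : ℕ) ≠ n - 1 := by omega
  by_cases h1 : (x : ℕ) < p
  · rw [cf_lt h1]
    by_cases h2 : (y : ℕ) < p
    · rw [cf_lt h2]; exact Fin.lt_def.mpr hxy
    · rw [cf_mid h2 hy]; rw [Fin.lt_def]; simp; omega
  · have h2 : ¬ (y : ℕ) < p := by omega
    rw [cf_mid h1 hx, cf_mid h2 hy, Fin.lt_def]; simp; omega

lemma cg_mono {p x y : Fin n} (hxy : (x : ℕ) < y) (hx : (x : ℕ) ≠ p)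
    (hy : (y : ℕ) ≠ p) : cg p x < cg p y := by
  have hxn := x.isLt
  have hyn := y.isLt
  by_cases h1 : (x : ℕ) < p
  · rw [cg_lt h1]
    by_cases h2 : (y : ℕ) < p
    · rw [cg_lt h2]; exact Fin.lt_def.mpr hxy
    · rw [cg_gt (by omega), Fin.lt_def]; simp; omega
  · rw [cg_gt (by omega), cg_gt (by omega), Fin.lt_def]; simp; omega

lemma mul_cyc_lt (π : Equiv.Perm (Fin n)) (p : Fin n) (x : ℕ) (hx : x < n)
    (h : x < (p : ℕ)) : (π * cyc p) ⟨x, hx⟩ = π ⟨x, hx⟩ := by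
  rw [Equiv.Perm.mul_apply, cyc_apply, cf_lt h]

lemma mul_cyc_last (hn : 0 < n) (π : Equiv.Perm (Fin n)) (p : Fin n) :
    (π * cyc p) ⟨n - 1, fl3 hn⟩ = π p := by
  rw [Equiv.Perm.mul_apply, cyc_apply,
    cf_last (x := ⟨n - 1, fl3 hn⟩) (by have := p.isLt; simp; omega) (by simp)]

lemma mul_cyc_mid (π : Equiv.Perm (Fin n)) (p : Fin n) (x : ℕ) (hx : x < n)
    (h1 : ¬ x < (p : ℕ)) (h2 : x ≠ n - 1) :
    (π * cyc p) ⟨x, hx⟩ = π ⟨x + 1, fl2 hx h2⟩ := by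
  rw [Equiv.Perm.mul_apply, cyc_apply, cf_mid (x := ⟨x, hx⟩) h1 h2]

lemma mul_cyc_inv_lt (π : Equiv.Perm (Fin n)) (p : Fin n) (x : ℕ) (hx : x < n)
    (h : x < (p : ℕ)) : (π * (cyc p)⁻¹) ⟨x, hx⟩ = π ⟨x, hx⟩ := by
  rw [Equiv.Perm.mul_apply, cyc_symm_apply, cg_lt h]

lemma mul_cyc_inv_eq (hn : 0 < n) (π : Equiv.Perm (Fin n)) (p : Fin n) :
    (π * (cyc p)⁻¹) p = π ⟨n - 1, fl3 hn⟩ := by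
  rw [Equiv.Perm.mul_apply, cyc_symm_apply, cg_eq rfl]

lemma mul_cyc_inv_gt (π : Equiv.Perm (Fin n)) (p : Fin n) (x : ℕ) (hx : x < n)
    (h : (p : ℕ) < x) : (π * (cyc p)⁻¹) ⟨x, hx⟩ = π ⟨x - 1, fl1 hx⟩ := by
  rw [Equiv.Perm.mul_apply, cyc_symm_apply, cg_gt (x := ⟨x, hx⟩) h]

/-- Moving the maximum to the end. -/
lemma Fend (hn : 0 < n) {π : Equiv.Perm (Fin n)} (hπ : Avoids321 π) (p : Fin n)
    (hp : π p = topF hn)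
    (hc : (p : ℕ) = 0 ∨ ∃ h : (p : ℕ) + 1 < n,
      π ⟨(p : ℕ) + 1, h⟩ < π ⟨(p : ℕ) - 1, fl1 p.isLt⟩) :
    Avoids321 (π * cyc p) ∧ ldes (π * cyc p) = (p : ℕ) ∧
      lind (π * cyc p) = n := by
  have hpn := p.isLt
  have hsym : π.symm (topF hn) = p := symm_top_eq hn hp
  have hav : Avoids321 (π * cyc p) := by
    rintro ⟨i, j, l, hij, hjl, h1, h2⟩
    have hlast : (l : ℕ) ≠ n - 1 := by
      intro h
      have hl : l = (⟨n - 1, fl3 hn⟩ : Fin n) := Fin.ext h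
      rw [hl, mul_cyc_last hn, hp] at h1
      exact absurd h1 (not_lt.mpr (le_top hn _))
    have hjn : (j : ℕ) ≠ n - 1 := by
      have := Fin.lt_def.mp hjl; have := l.isLt; omega
    have h1' : π (cf p l) < π (cf p j) := h1
    have h2' : π (cf p j) < π (cf p i) := h2
    exact no321 hπ (cf_mono (Fin.lt_def.mp hij) hjn)
      (cf_mono (Fin.lt_def.mp hjl) hlast) h1' h2'
  refine ⟨hav, ?_, ?_⟩
  · apply ldes_eq_of
    · intro j hj
      by_contra hgt
      push_neg at hgt
      obtain ⟨hj1, hjn⟩ := of_mem_desSet hj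
      rw [mem_desSet_iff _ j hj1 hjn] at hj
      have e1 : (π * cyc p) ⟨j - 1, fl1 hjn⟩
          = π ⟨j, hjn⟩ := by
        rw [mul_cyc_mid π p (j - 1) (by omega) (by omega) (by omega)]
        congr 1
        exact Fin.ext (by simp; omega)
      rw [e1] at hj
      by_cases hje : j = n - 1
      · have e2 : (⟨j, hjn⟩ : Fin n) = (⟨n - 1, fl3 hn⟩ : Fin n) := Fin.ext (by simp [hje])
        rw [e2, mul_cyc_last hn π p, hp] at hj
        exact absurd hj (not_lt.mpr (le_top hn _))
      · have e2 : (π * cyc p) ⟨j, hjn⟩ = π ⟨j + 1, fl2 hjn hje⟩ := by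
          rw [mul_cyc_mid π p j hjn (by omega) hje]
        rw [e2] at hj
        have : π ⟨j, hjn⟩ < π ⟨j + 1, fl2 hjn hje⟩ := by
          apply incr_after hn hπ
          · rw [hsym, Fin.lt_def]; simp; omega
          · rw [Fin.lt_def]; simp
        exact absurd hj (asymm this)
    · rcases Nat.eq_zero_or_pos (p : ℕ) with hp0 | hp0
      · left; exact hp0
      · right
        rcases hc with hc | ⟨hlt, hval⟩
        · omega
        · rw [mem_desSet_iff _ _ hp0 hpn]
          have e1 : (π * cyc p) ⟨(p : ℕ), hpn⟩ = π ⟨(p : ℕ) + 1, hlt⟩ := by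
            rw [mul_cyc_mid π p (p : ℕ) hpn (by omega) (by omega)]
          have e2 : (π * cyc p) ⟨(p : ℕ) - 1, fl1 hpn⟩
              = π ⟨(p : ℕ) - 1, fl1 hpn⟩ := mul_cyc_lt π p _ (fl1 hpn) (by omega)
          rw [e1, e2]
          exact hval
  · have hl : (π * cyc p) ⟨n - 1, fl3 hn⟩ = topF hn := by
      rw [mul_cyc_last hn π p, hp]
    have := symm_top_eq hn hl
    rw [lind_eq hn, this]
    simp; omega

/-! #### The maps of the bijection -/

def predF (x : Fin n) : Fin n := ⟨(x : ℕ) - 1, fl1 x.isLt⟩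

def succF (x : Fin n) : Fin n :=
  if h : (x : ℕ) + 1 < n then ⟨(x : ℕ) + 1, h⟩ else x

lemma swap_mul_left (π : Equiv.Perm (Fin n)) (a b : Fin n) :
    (π * Equiv.swap a b) a = π b := by
  rw [Equiv.Perm.mul_apply, Equiv.swap_apply_left]

lemma swap_mul_right (π : Equiv.Perm (Fin n)) (a b : Fin n) :
    (π * Equiv.swap a b) b = π a := by
  rw [Equiv.Perm.mul_apply, Equiv.swap_apply_right]

lemma swap_mul_other (π : Equiv.Perm (Fin n)) {a b x : Fin n} (h1 : x ≠ a)
    (h2 : x ≠ b) : (π * Equiv.swap a b) x = π x := by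
  rw [Equiv.Perm.mul_apply, Equiv.swap_apply_of_ne_of_ne h1 h2]

/-- Moving the maximum one step to the left. -/
lemma Fswap (hn : 0 < n) {π : Equiv.Perm (Fin n)} (hπ : Avoids321 π) (p : Fin n)
    (hp : π p = topF hn) (hp1 : 1 ≤ (p : ℕ))
    (hc : ∀ h : (p : ℕ) + 1 < n,
      π ⟨(p : ℕ) - 1, fl1 p.isLt⟩ < π ⟨(p : ℕ) + 1, h⟩) :
    Avoids321 (π * Equiv.swap (predF p) p) ∧
      lind (π * Equiv.swap (predF p) p) = (p : ℕ) := by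
  have hpn := p.isLt
  have hsym : π.symm (topF hn) = p := symm_top_eq hn hp
  set a : Fin n := predF p with ha
  have hac : (a : ℕ) = (p : ℕ) - 1 := rfl
  set σ := π * Equiv.swap a p with hσ
  have hsa : σ a = topF hn := by rw [hσ, swap_mul_left, hp]
  have hsp : σ p = π a := swap_mul_right π a p
  have hso : ∀ x : Fin n, x ≠ a → x ≠ p → σ x = π x := fun x h1 h2 =>
    swap_mul_other π h1 h2
  refine ⟨?_, ?_⟩
  · rintro ⟨i, j, l, hij, hjl, h1, h2⟩
    have hijc := Fin.lt_def.mp hij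
    have hjlc := Fin.lt_def.mp hjl
    have hja : j ≠ a := by
      intro h
      rw [h, hsa] at h2
      exact absurd h2 (not_lt.mpr (le_top hn _))
    have hla : l ≠ a := by
      intro h
      rw [h, hsa] at h1
      exact absurd h1 (not_lt.mpr (le_top hn _))
    by_cases hia : i = a
    · have hiac : (i : ℕ) = (p : ℕ) - 1 := by rw [hia]; exact hac
      by_cases hjp : j = p
      · have hjc : (j : ℕ) = (p : ℕ) := by rw [hjp]
        have hσj : σ j = π a := by rw [hjp]; exact hsp
        have hlp : l ≠ p := by
          intro h; rw [h, ← hjp] at hjl; exact lt_irrefl _ hjl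
        rw [hσj, hso l hla hlp] at h1
        -- h1 : π l < π a
        have hl2 : (p : ℕ) + 1 < n := by have := l.isLt; omega
        have hcc := hc hl2
        have hfin : (⟨(p : ℕ) - 1, fl1 p.isLt⟩ : Fin n) = a := Fin.ext (by rw [hac])
        rw [hfin] at hcc
        -- hcc : π a < π ⟨p+1, hl2⟩
        by_cases hl3 : (l : ℕ) = (p : ℕ) + 1
        · have : l = (⟨(p : ℕ) + 1, hl2⟩ : Fin n) := Fin.ext hl3
          rw [this] at h1
          exact absurd h1 (asymm hcc)
        · have hblt : (⟨(p : ℕ) + 1, hl2⟩ : Fin n) < l := by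
            rw [Fin.lt_def]; simp; omega
          have hpb : p < (⟨(p : ℕ) + 1, hl2⟩ : Fin n) := by
            rw [Fin.lt_def]; simp
          have hv1 : π l < π ⟨(p : ℕ) + 1, hl2⟩ := lt_trans h1 hcc
          have hv2 : π ⟨(p : ℕ) + 1, hl2⟩ < π p := by
            rw [hp]
            apply lt_top_of_ne hn
            intro hcon
            have h5 := symm_top_eq hn hcon
            rw [hsym] at h5
            have := congrArg Fin.val h5
            simp at this
          exact no321 hπ hpb hblt hv1 hv2
      · have hjc : (p : ℕ) < (j : ℕ) := by
          have h4 : (j : ℕ) ≠ (p : ℕ) := fun h => hjp (Fin.ext h)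
          have h5 : (j : ℕ) ≠ (p : ℕ) - 1 := fun h => hja (Fin.ext (by rw [hac, h]))
          omega
        have hlp : l ≠ p := fun h => by
          rw [h] at hjlc; omega
        rw [hso j hja hjp, hso l hla hlp] at h1
        have : π j < π l := by
          apply incr_after hn hπ _ hjl
          rw [hsym, Fin.lt_def]; omega
        exact absurd h1 (asymm this)
    · have hiac : (i : ℕ) ≠ (p : ℕ) - 1 := fun h => hia (Fin.ext (by rw [hac, h]))
      by_cases hip : i = p
      · have hic : (i : ℕ) = (p : ℕ) := by rw [hip]
        have hσi : σ i = π a := by rw [hip]; exact hsp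
        have hjp : j ≠ p := fun h => by rw [h] at hijc; omega
        have hlp : l ≠ p := fun h => by rw [h] at hjlc; omega
        rw [hσi, hso j hja hjp] at h2
        rw [hso j hja hjp, hso l hla hlp] at h1
        have hal : a < j := by rw [Fin.lt_def, hac]; omega
        exact no321 hπ hal hjl h1 h2
      · have hic : (i : ℕ) ≠ (p : ℕ) := fun h => hip (Fin.ext h)
        by_cases hjp : j = p
        · have hjc : (j : ℕ) = (p : ℕ) := by rw [hjp]
          have hσj : σ j = π a := by rw [hjp]; exact hsp
          have hlp : l ≠ p := fun h => by rw [h] at hjlc; omega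
          rw [hσj, hso i hia hip] at h2
          rw [hσj, hso l hla hlp] at h1
          -- h1 : π l < π a, h2 : π a < π i
          have hia2 : i < a := by rw [Fin.lt_def, hac]; omega
          have hal : a < l := by rw [Fin.lt_def, hac]; omega
          exact no321 hπ hia2 hal h1 h2
        · have hjc : (j : ℕ) ≠ (p : ℕ) := fun h => hjp (Fin.ext h)
          by_cases hlp : l = p
          · have hlc : (l : ℕ) = (p : ℕ) := by rw [hlp]
            have hσl : σ l = π a := by rw [hlp]; exact hsp
            rw [hσl, hso j hja hjp] at h1
            rw [hso j hja hjp, hso i hia hip] at h2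
            -- h1 : π a < π j???  no: h1 : σ l < σ j becomes π a < π j
            -- pattern: π a < π j < π i with i < j < a
            have hjac : (j : ℕ) ≠ (p : ℕ) - 1 := fun h => hja (Fin.ext (by rw [hac, h]))
            have hja2 : j < a := by rw [Fin.lt_def, hac]; omega
            exact no321 hπ hij hja2 h1 h2
          · rw [hso j hja hjp, hso l hla hlp] at h1
            rw [hso i hia hip, hso j hja hjp] at h2
            exact no321 hπ hij hjl h1 h2
  · have := symm_top_eq hn hsa
    rw [lind_eq hn, this, hac]
    omega

/-- Increasing from zero-based index `ldes` on. -/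
lemma mono_after_ldes {π : Equiv.Perm (Fin n)} {k : ℕ} (hd : ldes π = k) :
    ∀ m : ℕ, k ≤ m → ∀ h : m + 1 < n,
      π ⟨m, fl4 (Nat.lt_succ_self m) h⟩ < π ⟨m + 1, h⟩ := by
  intro m hm h
  have hub := (of_ldes_eq hd).1
  by_contra hle
  push_neg at hle
  have hne : π ⟨m + 1, h⟩ ≠ π ⟨m, fl4 (Nat.lt_succ_self m) h⟩ := by
    intro hcon
    have := π.injective hcon
    have := congrArg Fin.val this
    simp at this
  have hlt : π ⟨m + 1, h⟩ < π ⟨m, fl4 (Nat.lt_succ_self m) h⟩ :=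
    lt_of_le_of_ne hle hne
  have hmem : m + 1 ∈ desSet π := by
    rw [mem_desSet_iff π (m + 1) (by omega) h]
    have : (⟨m + 1 - 1, fl1 h⟩ : Fin n) = ⟨m, fl4 (Nat.lt_succ_self m) h⟩ :=
      Fin.ext (by simp)
    rw [this]
    exact hlt
  have := hub _ hmem
  omega

/-- Reinserting the maximum from the last position at zero-based position `k`. -/
lemma Gins (hn : 0 < n) {π' : Equiv.Perm (Fin n)} (hA : Avoids321 π') (k : ℕ)
    (hk : k < n) (hl : lind π' = n) (hd : ldes π' = k) :
    Avoids321 (π' * (cyc (⟨k, hk⟩ : Fin n))⁻¹) ∧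
      lind (π' * (cyc (⟨k, hk⟩ : Fin n))⁻¹) = k + 1 := by
  set ck : Fin n := ⟨k, hk⟩ with hck
  set π₄ := π' * (cyc ck)⁻¹ with hπ₄
  have hsym : (π'.symm (topF hn) : ℕ) = n - 1 := by
    have := lind_eq hn π'
    omega
  have hlast : π' ⟨n - 1, fl3 hn⟩ = topF hn := by
    have : (⟨n - 1, fl3 hn⟩ : Fin n) = π'.symm (topF hn) := Fin.ext (by rw [hsym])
    rw [this, π'.apply_symm_apply]
  have hmono := chain_mono π' k (mono_after_ldes hd)
  have htopk : π₄ ck = topF hn := by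
    rw [hπ₄, mul_cyc_inv_eq hn, hlast]
  refine ⟨?_, ?_⟩
  · rintro ⟨i, j, l, hij, hjl, h1, h2⟩
    have hijc := Fin.lt_def.mp hij
    have hjlc := Fin.lt_def.mp hjl
    have hjk : (j : ℕ) ≠ k := by
      intro h
      have : j = ck := Fin.ext h
      rw [this, htopk] at h2
      exact absurd h2 (not_lt.mpr (le_top hn _))
    have hlk : (l : ℕ) ≠ k := by
      intro h
      have : l = ck := Fin.ext h
      rw [this, htopk] at h1
      exact absurd h1 (not_lt.mpr (le_top hn _))
    by_cases hik : (i : ℕ) = k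
    · -- j, l > k ; values are π' (j-1), π' (l-1), increasing
      have hjgt : k < (j : ℕ) := by omega
      have hlgt : k < (l : ℕ) := by omega
      have ej : π₄ j = π' ⟨(j : ℕ) - 1, fl1 j.isLt⟩ := by
        have : j = (⟨(j : ℕ), j.isLt⟩ : Fin n) := Fin.ext rfl
        rw [hπ₄, this, mul_cyc_inv_gt π' ck (j : ℕ) j.isLt hjgt]
      have el : π₄ l = π' ⟨(l : ℕ) - 1, fl1 l.isLt⟩ := by
        have : l = (⟨(l : ℕ), l.isLt⟩ : Fin n) := Fin.ext rfl
        rw [hπ₄, this, mul_cyc_inv_gt π' ck (l : ℕ) l.isLt hlgt]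
      rw [ej, el] at h1
      have : π' ⟨(j : ℕ) - 1, fl1 j.isLt⟩ < π' ⟨(l : ℕ) - 1, fl1 l.isLt⟩ := by
        have := hmono ((j : ℕ) - 1) ((l : ℕ) - 1) (by omega) (by omega) (fl1 l.isLt)
        convert this using 3
      exact absurd h1 (asymm this)
    · -- none of i, j, l is at position k
      have key : ∀ x : Fin n, (x : ℕ) ≠ k → π₄ x = π' (cg ck x) := by
        intro x hx
        rw [hπ₄, Equiv.Perm.mul_apply, cyc_symm_apply]
      rw [key i hik, key j hjk] at h2
      rw [key j hjk, key l hlk] at h1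
      exact no321 hA (cg_mono hijc (by rw [hck]; exact hik) (by rw [hck]; exact hjk))
        (cg_mono hjlc (by rw [hck]; exact hjk) (by rw [hck]; exact hlk)) h1 h2
  · have := symm_top_eq hn htopk
    rw [lind_eq hn, this]

/-- Moving the maximum one step to the right. -/
lemma Gswap (hn : 0 < n) {π' : Equiv.Perm (Fin n)} (hA : Avoids321 π') (k : ℕ)
    (hk1 : 1 ≤ k) (hkn : k < n) (hl : lind π' = k) {b : Fin n}
    (hb : (b : ℕ) = k) :
    Avoids321 (π' * Equiv.swap (π'.symm (topF hn)) b) ∧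
      lind (π' * Equiv.swap (π'.symm (topF hn)) b) = k + 1 := by
  set a : Fin n := π'.symm (topF hn) with ha
  have hac : (a : ℕ) = k - 1 := by
    have := lind_eq hn π'
    omega
  have hatop : π' a = topF hn := π'.apply_symm_apply _
  set σ := π' * Equiv.swap a b with hσ
  have hsa : σ a = π' b := swap_mul_left π' a b
  have hsb : σ b = topF hn := by rw [hσ, swap_mul_right, hatop]
  have hso : ∀ x : Fin n, x ≠ a → x ≠ b → σ x = π' x := fun x h1 h2 =>
    swap_mul_other π' h1 h2
  refine ⟨?_, ?_⟩
  · rintro ⟨i, j, l, hij, hjl, h1, h2⟩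
    have hijc := Fin.lt_def.mp hij
    have hjlc := Fin.lt_def.mp hjl
    have hjb : j ≠ b := by
      intro h
      rw [h, hsb] at h2
      exact absurd h2 (not_lt.mpr (le_top hn _))
    have hlb : l ≠ b := by
      intro h
      rw [h, hsb] at h1
      exact absurd h1 (not_lt.mpr (le_top hn _))
    have hjbc : (j : ℕ) ≠ k := fun h => hjb (Fin.ext (by rw [hb, h]))
    have hlbc : (l : ℕ) ≠ k := fun h => hlb (Fin.ext (by rw [hb, h]))
    by_cases hib : i = b
    · have hic : (i : ℕ) = k := by rw [hib, hb]
      have hja : j ≠ a := fun h => by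
        have := congrArg Fin.val h; rw [hac] at this; omega
      have hla : l ≠ a := fun h => by
        have := congrArg Fin.val h; rw [hac] at this; omega
      rw [hso j hja hjb, hso l hla hlb] at h1
      have : π' j < π' l := by
        apply incr_after hn hA _ hjl
        rw [← ha, Fin.lt_def, hac]; omega
      exact absurd h1 (asymm this)
    · have hic : (i : ℕ) ≠ k := fun h => hib (Fin.ext (by rw [hb, h]))
      by_cases hia : i = a
      · have hiac : (i : ℕ) = k - 1 := by rw [hia]; exact hac
        have hja : j ≠ a := fun h => by
          have := congrArg Fin.val h; rw [hac] at this; omega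
        have hla : l ≠ a := fun h => by
          have := congrArg Fin.val h; rw [hac] at this; omega
        rw [hso j hja hjb, hso l hla hlb] at h1
        have : π' j < π' l := by
          apply incr_after hn hA _ hjl
          rw [← ha, Fin.lt_def, hac]; omega
        exact absurd h1 (asymm this)
      · have hiac : (i : ℕ) ≠ k - 1 := fun h => hia (Fin.ext (by rw [hac, h]))
        by_cases hja : j = a
        · have hjac : (j : ℕ) = k - 1 := by rw [hja]; exact hac
          have hσj : σ j = π' b := by rw [hja]; exact hsa
          have hla : l ≠ a := fun h => by
            have := congrArg Fin.val h
            rw [hac] at this; omega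
          rw [hσj, hso i hia hib] at h2
          rw [hσj, hso l hla hlb] at h1
          -- h1 : π' l < π' b, h2 : π' b < π' i
          have hibf : i < b := by rw [Fin.lt_def, hb]; omega
          have hbl : b < l := by rw [Fin.lt_def, hb]; omega
          exact no321 hA hibf hbl h1 h2
        · have hjac : (j : ℕ) ≠ k - 1 := fun h => hja (Fin.ext (by rw [hac, h]))
          by_cases hla : l = a
          · have hlac : (l : ℕ) = k - 1 := by rw [hla]; exact hac
            have hσl : σ l = π' b := by rw [hla]; exact hsa
            rw [hσl, hso j hja hjb] at h1
            rw [hso i hia hib, hso j hja hjb] at h2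
            -- h1 : π' b < π' j is wrong direction: σ l < σ j gives π' b < π' j
            -- pattern (i, j, b): π' b < π' j < π' i with i < j < b
            have hjbf : j < b := by rw [Fin.lt_def, hb]; omega
            exact no321 hA hij hjbf h1 h2
          · rw [hso j hja hjb, hso l hla hlb] at h1
            rw [hso i hia hib, hso j hja hjb] at h2
            exact no321 hA hij hjl h1 h2
  · have := symm_top_eq hn hsb
    rw [lind_eq hn, this, hb]

/-- Condition to move the maximum to the end (rather than one step left). -/
def CondF (π : Equiv.Perm (Fin n)) : Prop :=
  lind π = 1 ∨ (lind π < n ∧ pval π (lind π + 1) < pval π (lind π - 1))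

instance (π : Equiv.Perm (Fin n)) : Decidable (CondF π) := by
  unfold CondF; infer_instance

def Fmap (hn : 0 < n) (π : Equiv.Perm (Fin n)) : Equiv.Perm (Fin n) :=
  if CondF π then π * cyc (π.symm (topF hn))
  else π * Equiv.swap (predF (π.symm (topF hn))) (π.symm (topF hn))

def Gmap (hn : 0 < n) (π : Equiv.Perm (Fin n)) : Equiv.Perm (Fin n) :=
  if lind π = n then
    (if h : ldes π < n then π * (cyc (⟨ldes π, h⟩ : Fin n))⁻¹ else π)
  else π * Equiv.swap (π.symm (topF hn)) (succF (π.symm (topF hn)))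

lemma pval_eq (π : Equiv.Perm (Fin n)) (m : ℕ) (h : m - 1 < n) :
    pval π m = (π ⟨m - 1, h⟩ : ℕ) + 1 := dif_pos h

lemma top_at_last (hn : 0 < n) {π' : Equiv.Perm (Fin n)} (hln : lind π' = n) :
    π' ⟨n - 1, fl3 hn⟩ = topF hn := by
  have hsym : (π'.symm (topF hn) : ℕ) = n - 1 := by
    have := lind_eq hn π'
    omega
  have : (⟨n - 1, fl3 hn⟩ : Fin n) = π'.symm (topF hn) := Fin.ext (by rw [hsym])
  rw [this, π'.apply_symm_apply]

lemma F_total (hn : 0 < n) {π : Equiv.Perm (Fin n)} (hA : Avoids321 π) {k : ℕ}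
    (hl : lind π = k + 1) (hkn : k < n) :
    Avoids321 (Fmap hn π) ∧ ldes (Fmap hn π) = k ∧ Gmap hn (Fmap hn π) = π := by
  have hpc : (π.symm (topF hn) : ℕ) = k := by have := lind_eq hn π; omega
  have hptop : π (π.symm (topF hn)) = topF hn := π.apply_symm_apply _
  by_cases hC : CondF π
  · have hFm : Fmap hn π = π * cyc (π.symm (topF hn)) := by
      unfold Fmap; rw [if_pos hC]
    have hc : (π.symm (topF hn) : ℕ) = 0 ∨ ∃ h : (π.symm (topF hn) : ℕ) + 1 < n,
        π ⟨(π.symm (topF hn) : ℕ) + 1, h⟩ <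
          π ⟨(π.symm (topF hn) : ℕ) - 1, fl1 (π.symm (topF hn)).isLt⟩ := by
      rcases hC with hC1 | ⟨hC2, hC3⟩
      · left; omega
      · by_cases hk0 : k = 0
        · left; omega
        · right
          rw [lind_eq hn π] at hC3
          rw [pval_eq π ((π.symm (topF hn) : ℕ) + 1 + 1) (by omega),
              pval_eq π ((π.symm (topF hn) : ℕ) + 1 - 1) (by omega)] at hC3
          exact ⟨by omega, Fin.lt_def.mpr (Nat.lt_of_succ_lt_succ hC3)⟩
    obtain ⟨hav, hld, hli⟩ := Fend hn hA _ hptop hc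
    rw [hFm]
    refine ⟨hav, by omega, ?_⟩
    unfold Gmap
    have hld' : ldes (π * cyc (π.symm (topF hn))) < n :=
      lt_of_eq_of_lt hld (π.symm (topF hn)).isLt
    rw [if_pos hli, dif_pos hld']
    have e3 : (⟨ldes (π * cyc (π.symm (topF hn))), hld'⟩ : Fin n)
        = π.symm (topF hn) := Fin.ext hld
    rw [e3]
    exact mul_inv_cancel_right π _
  · have hFm : Fmap hn π = π * Equiv.swap (predF (π.symm (topF hn))) (π.symm (topF hn)) := by
      unfold Fmap; rw [if_neg hC]
    unfold CondF at hC
    push_neg at hC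
    obtain ⟨hC1, hC2⟩ := hC
    have hk1 : 1 ≤ k := by omega
    have hp1 : 1 ≤ (π.symm (topF hn) : ℕ) := by omega
    have hc : ∀ h : (π.symm (topF hn) : ℕ) + 1 < n,
        π ⟨(π.symm (topF hn) : ℕ) - 1, fl1 (π.symm (topF hn)).isLt⟩ <
          π ⟨(π.symm (topF hn) : ℕ) + 1, h⟩ := by
      intro h
      have hln : lind π < n := by omega
      have hle := hC2 hln
      rw [lind_eq hn π] at hle
      rw [pval_eq π ((π.symm (topF hn) : ℕ) + 1 - 1) (by omega),
          pval_eq π ((π.symm (topF hn) : ℕ) + 1 + 1) (by omega)] at hle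
      refine Fin.lt_def.mpr (lt_of_le_of_ne (Nat.le_of_succ_le_succ hle) ?_)
      intro hcon
      have h8 : (⟨(π.symm (topF hn) : ℕ) + 1 - 1 - 1, by omega⟩ : Fin n)
          = ⟨(π.symm (topF hn) : ℕ) + 1 + 1 - 1, by omega⟩ :=
        π.injective (Fin.ext hcon)
      have h9 := Fin.mk_eq_mk.mp h8
      omega
    obtain ⟨hav, hlis⟩ := Fswap hn hA _ hptop hp1 hc
    rw [hFm]
    have hldS : ldes (π * Equiv.swap (predF (π.symm (topF hn))) (π.symm (topF hn))) = k := by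
      rw [ldes_eq_lind hn hav (by omega), hlis, hpc]
    refine ⟨hav, hldS, ?_⟩
    unfold Gmap
    rw [if_neg (show ¬ lind (π * Equiv.swap (predF (π.symm (topF hn)))
      (π.symm (topF hn))) = n by rw [hlis]; omega)]
    have hsa : (π * Equiv.swap (predF (π.symm (topF hn))) (π.symm (topF hn)))
        (predF (π.symm (topF hn))) = topF hn := by
      rw [swap_mul_left, hptop]
    have hQ := symm_top_eq hn hsa
    rw [hQ]
    have h7 : ((predF (π.symm (topF hn)) : Fin n) : ℕ) + 1 < n := by
      have : ((predF (π.symm (topF hn)) : Fin n) : ℕ) = (π.symm (topF hn) : ℕ) - 1 := rfl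
      omega
    have hsucc : succF (predF (π.symm (topF hn))) = π.symm (topF hn) := by
      unfold succF
      rw [dif_pos h7]
      exact Fin.ext (by
        have : ((predF (π.symm (topF hn)) : Fin n) : ℕ) = (π.symm (topF hn) : ℕ) - 1 := rfl
        simp [this]; omega)
    rw [hsucc, mul_assoc, Equiv.swap_mul_self, mul_one]

lemma G_total (hn : 0 < n) {π' : Equiv.Perm (Fin n)} (hA : Avoids321 π') {k : ℕ}
    (hd : ldes π' = k) (hkn : k < n) :
    Avoids321 (Gmap hn π') ∧ lind (Gmap hn π') = k + 1 ∧
      Fmap hn (Gmap hn π') = π' := by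
  by_cases hln : lind π' = n
  · have hG : Gmap hn π' = π' * (cyc (⟨k, hkn⟩ : Fin n))⁻¹ := by
      unfold Gmap
      have hd' : ldes π' < n := lt_of_eq_of_lt hd hkn
      rw [if_pos hln, dif_pos hd']
      have e3 : (⟨ldes π', hd'⟩ : Fin n) = ⟨k, hkn⟩ := Fin.ext hd
      rw [e3]
    obtain ⟨hav, hli⟩ := Gins hn hA k hkn hln hd
    rw [hG]
    refine ⟨hav, hli, ?_⟩
    have htop4 : (π' * (cyc (⟨k, hkn⟩ : Fin n))⁻¹) ⟨k, hkn⟩ = topF hn := by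
      rw [mul_cyc_inv_eq hn, top_at_last hn hln]
    have hsym4 := symm_top_eq hn htop4
    have hCF : CondF (π' * (cyc (⟨k, hkn⟩ : Fin n))⁻¹) := by
      by_cases hk0 : k = 0
      · left; rw [hli, hk0]
      · right
        have hkmem : k ∈ desSet π' := by
          rcases (of_ldes_eq hd).2 with h | h
          · omega
          · exact h
        obtain ⟨hk1, hkn'⟩ := of_mem_desSet hkmem
        have hdes := (mem_desSet_iff π' k hk1 hkn').mp hkmem
        have hk2 : k + 1 < n := by
          by_contra hcc
          have e4 : (⟨k, hkn'⟩ : Fin n) = ⟨n - 1, fl3 hn⟩ :=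
            Fin.ext (show k = n - 1 by omega)
          rw [e4, top_at_last hn hln] at hdes
          exact absurd hdes (not_lt.mpr (le_top hn _))
        refine ⟨by rw [hli]; exact hk2, ?_⟩
        rw [hli]
        rw [pval_eq _ (k + 1 + 1) hk2, pval_eq _ (k + 1 - 1) (fl1 hkn')]
        have e5 : (π' * (cyc (⟨k, hkn⟩ : Fin n))⁻¹) ⟨k + 1 + 1 - 1, hk2⟩
            = π' ⟨k, hkn'⟩ := by
          rw [mul_cyc_inv_gt π' ⟨k, hkn⟩ (k + 1 + 1 - 1) hk2 (Nat.lt_succ_self k)]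
          exact congrArg π' (Fin.ext rfl)
        have e6 : (π' * (cyc (⟨k, hkn⟩ : Fin n))⁻¹) ⟨k + 1 - 1 - 1, fl1 hkn'⟩
            = π' ⟨k - 1, fl1 hkn'⟩ := by
          rw [mul_cyc_inv_lt π' ⟨k, hkn⟩ (k + 1 - 1 - 1) (fl1 hkn')
            (Nat.sub_lt hk1 Nat.one_pos)]
          exact congrArg π' (Fin.ext rfl)
        rw [e5, e6]
        exact Nat.succ_lt_succ (Fin.lt_def.mp hdes)
    unfold Fmap
    rw [if_pos hCF, hsym4]
    exact inv_mul_cancel_right π' _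
  · have hlle := lind_le hn π'
    have hlltn : lind π' < n := by omega
    have hlds := ldes_eq_lind hn hA hlltn
    have hlk : lind π' = k := by omega
    have hk1 : 1 ≤ k := by omega
    have hac : (π'.symm (topF hn) : ℕ) = k - 1 := by
      have := lind_eq hn π'
      omega
    have hb : ((succF (π'.symm (topF hn)) : Fin n) : ℕ) = k := by
      unfold succF
      rw [dif_pos (by omega)]
      simp [hac]; omega
    have hG : Gmap hn π' = π' * Equiv.swap (π'.symm (topF hn))
        (succF (π'.symm (topF hn))) := by
      unfold Gmap; rw [if_neg hln]
    obtain ⟨hav, hli⟩ := Gswap hn hA k hk1 hkn hlk hb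
    rw [hG]
    refine ⟨hav, hli, ?_⟩
    have hatop : π' (π'.symm (topF hn)) = topF hn := π'.apply_symm_apply _
    have htopb : (π' * Equiv.swap (π'.symm (topF hn)) (succF (π'.symm (topF hn))))
        (succF (π'.symm (topF hn))) = topF hn := by
      rw [swap_mul_right, hatop]
    have hQ := symm_top_eq hn htopb
    have hCF : ¬ CondF (π' * Equiv.swap (π'.symm (topF hn))
        (succF (π'.symm (topF hn)))) := by
      rintro (hC1 | ⟨hC2, hC3⟩)
      · rw [hli] at hC1; omega
      · rw [hli] at hC3
        have hk2 : k + 1 < n := by rw [hli] at hC2; omega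
        rw [pval_eq _ (k + 1 + 1) hk2, pval_eq _ (k + 1 - 1) (fl1 hkn)] at hC3
        have e5 : (π' * Equiv.swap (π'.symm (topF hn)) (succF (π'.symm (topF hn))))
            ⟨k + 1 + 1 - 1, hk2⟩ = π' ⟨k + 1, hk2⟩ := by
          have e5a : (⟨k + 1 + 1 - 1, hk2⟩ : Fin n) = ⟨k + 1, hk2⟩ :=
            Fin.ext rfl
          rw [e5a]
          apply swap_mul_other
          · intro hcon
            have h11 : k + 1 = ((π'.symm (topF hn) : Fin n) : ℕ) :=
              congrArg Fin.val hcon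
            omega
          · intro hcon
            have h11 : k + 1 = ((succF (π'.symm (topF hn)) : Fin n) : ℕ) :=
              congrArg Fin.val hcon
            omega
        have e6 : (π' * Equiv.swap (π'.symm (topF hn)) (succF (π'.symm (topF hn))))
            ⟨k + 1 - 1 - 1, fl1 hkn⟩ = π' (succF (π'.symm (topF hn))) := by
          have e6a : (⟨k + 1 - 1 - 1, fl1 hkn⟩ : Fin n) = π'.symm (topF hn) :=
            Fin.ext (show k + 1 - 1 - 1 = ((π'.symm (topF hn) : Fin n) : ℕ) by omega)
          rw [e6a, swap_mul_left]
        rw [e5, e6] at hC3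
        have hbfin : (succF (π'.symm (topF hn)) : Fin n) = ⟨k, hkn⟩ := Fin.ext hb
        rw [hbfin] at hC3
        have h12 : π' ⟨k, hkn⟩ < π' ⟨k + 1, hk2⟩ := by
          apply incr_after hn hA
          · rw [Fin.lt_def, hac]
            exact Nat.sub_lt hk1 Nat.one_pos
          · rw [Fin.lt_def]
            exact Nat.lt_succ_self k
        have := Fin.lt_def.mp h12
        omega
    unfold Fmap
    rw [if_neg hCF, hQ]
    have hpred : predF (succF (π'.symm (topF hn))) = π'.symm (topF hn) := by
      apply Fin.ext
      have : ((predF (succF (π'.symm (topF hn))) : Fin n) : ℕ)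
          = ((succF (π'.symm (topF hn)) : Fin n) : ℕ) - 1 := rfl
      rw [this, hb, hac]
    rw [hpred, mul_assoc, Equiv.swap_mul_self, mul_one]

lemma mem_Tset {π : Equiv.Perm (Fin n)} : π ∈ Tset n ↔ Avoids321 π := by
  unfold Tset
  rw [Finset.mem_filter]
  simp

end LdesLindAux

theorem ldes_lind_equidistributed (n k : ℕ) :
    ((Tset n).filter (fun π => ldes π = k)).card =
      ((Tset n).filter (fun π => lind π - 1 = k)).card := by
  open LdesLindAux in
  rcases Nat.eq_zero_or_pos n with h0 | hn
  · subst h0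
    apply congrArg Finset.card
    apply Finset.filter_congr
    intro π _
    have hdes : desSet π = ∅ := by
      unfold desSet
      rw [Finset.Icc_eq_empty (by omega), Finset.filter_empty]
    have h1 : ldes π = 0 := by unfold ldes; rw [hdes]; rfl
    have h2 : lind π = 0 := by
      unfold lind pval
      rw [dif_neg (by omega)]
    rw [h1, h2]
  · by_cases hkn : k < n
    · refine Finset.card_bij' (fun π _ => Gmap hn π) (fun π _ => Fmap hn π)
        ?_ ?_ ?_ ?_
      · intro π' hm
        rw [Finset.mem_filter] at hm ⊢
        obtain ⟨hT, hld⟩ := hm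
        have hA := mem_Tset.mp hT
        obtain ⟨hav, hli, -⟩ := G_total hn hA hld hkn
        refine ⟨mem_Tset.mpr hav, ?_⟩
        show lind (Gmap hn π') - 1 = k
        omega
      · intro π hm
        rw [Finset.mem_filter] at hm ⊢
        obtain ⟨hT, hld⟩ := hm
        have hA := mem_Tset.mp hT
        have hl : lind π = k + 1 := by
          have := lind_le hn π
          omega
        obtain ⟨hav, hld2, -⟩ := F_total hn hA hl hkn
        exact ⟨mem_Tset.mpr hav, hld2⟩
      · intro π' hm
        rw [Finset.mem_filter] at hm
        exact (G_total hn (mem_Tset.mp hm.1) hm.2 hkn).2.2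
      · intro π hm
        rw [Finset.mem_filter] at hm
        have hl : lind π = k + 1 := by
          have := lind_le hn π
          omega
        exact (F_total hn (mem_Tset.mp hm.1) hl hkn).2.2
    · rw [Finset.filter_false_of_mem, Finset.filter_false_of_mem,
        Finset.card_empty]
      · intro π _
        have := lind_le hn π
        omega
      · intro π _
        have := ldes_lt hn π
        omega
end

section
/- The sum over 321-avoiding permutations π of S_{2n+1} of sign(π)·q^{ldes(π)} equals the sum over 321-avoiding permutations σ of S_n of q^{2·ldes(σ)}, for all n ≥ 0. -/
open Finset

/-!
Deleting the largest letter of a 321-avoiding permutation of length `m + 1` leaves some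
`σ ∈ T_m`, and the deleted letter must have stood at a (zero-based) position `k ≥ ldes σ`;
conversely every such insertion avoids 321. Inserting at the end changes neither `ldes` nor `inv`,
while inserting at `k < m` makes `ldes = k + 1` and adds `m - k` inversions. This gives a recursion
for the coefficients of `∑_{T_m} t ^ inv * q ^ ldes`, and an induction on `n` proves the theorem
simultaneously with its even-length companion
`∑_{T_{2n+2}} sign * q ^ ldes = (1 - q) * ∑_{T_{n+1}} q ^ (2 * ldes)`.
-/

open Equiv

namespace Equiv

theorem optionCongr_removeNone {α β : Type*} {e : Option α ≃ Option β} (he : e none = none) :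
    optionCongr (removeNone e) = e := by
  ext x : 1
  cases x with
  | none => simpa using he.symm
  | some x =>
    obtain ⟨y, hy⟩ := Option.ne_none_iff_exists'.1 fun h =>
      Option.some_ne_none x (e.injective (h.trans he.symm))
    simp [removeNone_some e ⟨y, hy⟩]

end Equiv

theorem Fin.lt_of_forall_lt_succ {α : Type*} [Preorder α] {N c : ℕ} {f : Fin N → α}
    (h : ∀ (i : ℕ) (hi : i + 1 < N), c ≤ i → f ⟨i, by omega⟩ < f ⟨i + 1, hi⟩)
    {a b : Fin N} (hca : c ≤ a) (hab : a < b) : f a < f b := by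
  obtain ⟨a, ha⟩ := a
  obtain ⟨b, hb⟩ := b
  rw [Fin.mk_lt_mk] at hab
  induction b, hab using Nat.le_induction with
  | base => exact h a hb hca
  | succ b hab ih =>
    exact (ih (by omega)).trans (h b hb ((show c ≤ a from hca).trans (by omega)))

theorem Fin.lt_succAbove_iff_val_le {n : ℕ} (p : Fin (n + 1)) (i : Fin n) :
    p < p.succAbove i ↔ (p : ℕ) ≤ i := by
  rw [Fin.lt_succAbove_iff_le_castSucc, Fin.le_def, Fin.val_castSucc]

theorem Finset.sum_range_two_mul {β : Type*} [AddCommMonoid β] (f : ℕ → β) (N : ℕ) :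
    ∑ i ∈ range (2 * N), f i = ∑ i ∈ range N, (f (2 * i) + f (2 * i + 1)) := by
  induction N with
  | zero => simp
  | succ N ih =>
    rw [Nat.mul_succ, Finset.sum_range_succ, Finset.sum_range_succ, ih, Finset.sum_range_succ,
      add_assoc]

theorem Finset.sum_range_two_mul_of_odd_eq_zero {β : Type*} [AddCommMonoid β] {f g : ℕ → β}
    (h : ∀ i, f (2 * i) = g i ∧ f (2 * i + 1) = 0) (N : ℕ) :
    ∑ i ∈ range (2 * N), f i = ∑ i ∈ range N, g i := by
  simp only [Finset.sum_range_two_mul, (h _).1, (h _).2, add_zero]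

theorem Finset.sum_range_two_mul_of_odd_eq_neg {β : Type*} [AddCommGroup β] {f g : ℕ → β}
    (h : ∀ i, f (2 * i) = g i ∧ f (2 * i + 1) = -g i) (N : ℕ) :
    ∑ i ∈ range (2 * N), f i = 0 := by
  simp only [Finset.sum_range_two_mul, (h _).1, (h _).2, add_neg_cancel, Finset.sum_const_zero]

section PermStatistics

variable {N : ℕ}

theorem succ_mem_desSet_iff (π : Perm (Fin N)) (i : ℕ) :
    i + 1 ∈ desSet π ↔ ∃ hi : i + 1 < N, π ⟨i + 1, hi⟩ < π ⟨i, by omega⟩ := by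
  simp only [desSet, Finset.mem_filter, Finset.mem_Icc, pval, add_tsub_cancel_right]
  constructor
  · rintro ⟨⟨-, hi⟩, hlt⟩
    refine ⟨by omega, ?_⟩
    rw [dif_pos (by omega), dif_pos (by omega)] at hlt
    rw [Fin.lt_def]
    omega
  · rintro ⟨hi, hlt⟩
    refine ⟨⟨by omega, by omega⟩, ?_⟩
    rw [dif_pos hi, dif_pos (by omega)]
    rw [Fin.lt_def] at hlt
    omega

theorem ldes_le_iff_adjacent (π : Perm (Fin N)) (c : ℕ) :
    ldes π ≤ c ↔ ∀ (i : ℕ) (hi : i + 1 < N), c ≤ i → π ⟨i, by omega⟩ < π ⟨i + 1, hi⟩ := by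
  have hpos : ∀ j ∈ desSet π, 1 ≤ j := fun j hj =>
    (Finset.mem_Icc.1 (Finset.mem_filter.1 hj).1).1
  rw [ldes, Finset.sup_le_iff]
  constructor
  · intro h i hi hci
    refine lt_of_le_of_ne (not_lt.1 fun hlt => ?_) (π.injective.ne (by simp))
    have := h _ ((succ_mem_desSet_iff π i).2 ⟨hi, hlt⟩)
    simp only [id] at this
    omega
  · intro h j hj
    obtain ⟨i, rfl⟩ := Nat.exists_eq_add_of_le' (hpos j hj)
    obtain ⟨hi, hlt⟩ := (succ_mem_desSet_iff π i).1 hj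
    by_contra hci
    exact lt_asymm hlt (h i hi (by simp only [id] at hci; omega))

theorem ldes_le (π : Perm (Fin N)) : ldes π ≤ N - 1 :=
  Finset.sup_le fun _ hi => (Finset.mem_Icc.1 (Finset.mem_filter.1 hi).1).2

theorem ldes_le_iff (π : Perm (Fin N)) (c : ℕ) :
    ldes π ≤ c ↔ ∀ a b : Fin N, c ≤ a → a < b → π a < π b := by
  rw [ldes_le_iff_adjacent]
  refine ⟨fun h a b => Fin.lt_of_forall_lt_succ h, fun h _ hi hci => h _ _ hci ?_⟩
  simp [Fin.lt_def]

theorem invNum_eq_sum (π : Perm (Fin N)) :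
    invNum π = ∑ a, ∑ b, if a < b ∧ π b < π a then 1 else 0 := by
  rw [invNum, Finset.card_filter, Fintype.sum_prod_type]

end PermStatistics

section InsertMax

variable {m : ℕ}

/-- `insertMax m (k, σ)` writes the letter `Fin.last m` into the word of `σ` at position `k`. -/
def insertMax (m : ℕ) : Fin (m + 1) × Perm (Fin m) ≃ Perm (Fin (m + 1)) where
  toFun x := (finSuccEquiv' x.1).trans (x.2.optionCongr.trans (finSuccEquiv' (Fin.last m)).symm)
  invFun π := (π.symm (Fin.last m), removeNone
    ((finSuccEquiv' (π.symm (Fin.last m))).symm.trans (π.trans (finSuccEquiv' (Fin.last m)))))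
  left_inv := by
    rintro ⟨k, σ⟩
    dsimp only
    have hk : ((finSuccEquiv' k).trans
        (σ.optionCongr.trans (finSuccEquiv' (Fin.last m)).symm)).symm (Fin.last m) = k := by
      simp [Equiv.symm_apply_eq, finSuccEquiv'_at]
    have hσ : (finSuccEquiv' k).symm.trans (((finSuccEquiv' k).trans
        (σ.optionCongr.trans (finSuccEquiv' (Fin.last m)).symm)).trans
          (finSuccEquiv' (Fin.last m))) = σ.optionCongr := by
      ext x : 1
      simp
    rw [hk, hσ, removeNone_optionCongr]
  right_inv π := by
    dsimp only
    rw [optionCongr_removeNone (by simp)]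
    ext i
    simp

variable (k : Fin (m + 1)) (σ : Perm (Fin m))

@[simp] theorem insertMax_apply_self :
    insertMax m (k, σ) k = Fin.last m := by
  simp [insertMax, finSuccEquiv'_at]

@[simp] theorem insertMax_apply_succAbove (i : Fin m) :
    insertMax m (k, σ) (k.succAbove i) = (σ i).castSucc := by
  simp [insertMax, finSuccEquiv'_succAbove, Fin.succAbove_last]

theorem insertMax_succAbove_lt_succAbove_iff {i j : Fin m} :
    insertMax m (k, σ) (k.succAbove i) < insertMax m (k, σ) (k.succAbove j) ↔ σ i < σ j := by
  simp

theorem insertMax_succAbove_lt_self (i : Fin m) :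
    insertMax m (k, σ) (k.succAbove i) < insertMax m (k, σ) k := by
  simp [Fin.castSucc_lt_last]

theorem ldes_insertMax_of_lt (hk : (k : ℕ) < m) (hσ : ldes σ ≤ k) :
    ldes (insertMax m (k, σ)) = k + 1 := by
  refine le_antisymm ((ldes_le_iff _ _).2 fun a b hka hab => ?_) (Nat.succ_le_of_lt ?_)
  · have hka' : k < a := Fin.lt_def.2 (by omega)
    obtain ⟨a, rfl⟩ := Fin.exists_succAbove_eq hka'.ne'
    obtain ⟨b, rfl⟩ := Fin.exists_succAbove_eq (hka'.trans hab).ne'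
    rw [insertMax_succAbove_lt_succAbove_iff]
    exact (ldes_le_iff σ k).1 hσ a b ((Fin.lt_succAbove_iff_val_le _ _).1 hka')
      (Fin.succAbove_lt_succAbove_iff.1 hab)
  · refine lt_of_not_ge fun h => lt_asymm (insertMax_succAbove_lt_self k σ ⟨k, hk⟩) ?_
    exact (ldes_le_iff _ k).1 h _ _ le_rfl ((Fin.lt_succAbove_iff_val_le _ _).2 le_rfl)

theorem ldes_insertMax_last : ldes (insertMax m (Fin.last m, σ)) = ldes σ := by
  refine eq_of_forall_ge_iff fun c => ?_
  have hval : ∀ i : Fin m, ((Fin.last m).succAbove i : ℕ) = i := by simp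
  rw [ldes_le_iff, ldes_le_iff]
  constructor
  · intro h a b hca hab
    rw [← insertMax_succAbove_lt_succAbove_iff (Fin.last m)]
    exact h _ _ (by rwa [hval]) (Fin.succAbove_lt_succAbove_iff.2 hab)
  · intro h a b hca hab
    obtain ⟨a, rfl⟩ := Fin.exists_succAbove_eq (hab.trans_le (Fin.le_last b)).ne
    obtain rfl | hb := eq_or_ne b (Fin.last m)
    · exact insertMax_succAbove_lt_self _ σ a
    obtain ⟨b, rfl⟩ := Fin.exists_succAbove_eq hb
    rw [insertMax_succAbove_lt_succAbove_iff]
    exact h a b (by rwa [hval] at hca) (Fin.succAbove_lt_succAbove_iff.1 hab)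

theorem avoids321_insertMax_iff :
    Avoids321 (insertMax m (k, σ)) ↔ Avoids321 σ ∧ ldes σ ≤ k := by
  rw [ldes_le_iff]
  simp only [Avoids321, not_exists]
  constructor
  · intro h
    refine ⟨fun i j l ⟨hij, hjl, hlj, hji⟩ => h _ _ _ ⟨Fin.succAbove_lt_succAbove_iff.2 hij,
      Fin.succAbove_lt_succAbove_iff.2 hjl, (insertMax_succAbove_lt_succAbove_iff k σ).2 hlj,
      (insertMax_succAbove_lt_succAbove_iff k σ).2 hji⟩, fun a b hka hab => ?_⟩
    refine lt_of_le_of_ne (not_lt.1 fun hba => h k (k.succAbove a) (k.succAbove b)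
      ⟨(Fin.lt_succAbove_iff_val_le _ _).2 hka, Fin.succAbove_lt_succAbove_iff.2 hab,
        (insertMax_succAbove_lt_succAbove_iff k σ).2 hba, insertMax_succAbove_lt_self k σ a⟩)
      (σ.injective.ne hab.ne)
  · rintro ⟨hσ, hmono⟩ i j l ⟨hij, hjl, hlj, hji⟩
    have hmax : ∀ x y, insertMax m (k, σ) x < insertMax m (k, σ) y → x ≠ k := by
      rintro x y hxy rfl
      exact (Fin.le_last _).not_gt (by simpa using hxy)
    obtain ⟨j, rfl⟩ := Fin.exists_succAbove_eq (hmax _ _ hji)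
    obtain ⟨l, rfl⟩ := Fin.exists_succAbove_eq (hmax _ _ hlj)
    rw [insertMax_succAbove_lt_succAbove_iff] at hlj
    obtain rfl | hik := eq_or_ne i k
    · exact lt_asymm hlj (hmono j l ((Fin.lt_succAbove_iff_val_le _ _).1 hij)
        (Fin.succAbove_lt_succAbove_iff.1 hjl))
    obtain ⟨i, rfl⟩ := Fin.exists_succAbove_eq hik
    rw [insertMax_succAbove_lt_succAbove_iff] at hji
    exact hσ i j l ⟨Fin.succAbove_lt_succAbove_iff.1 hij, Fin.succAbove_lt_succAbove_iff.1 hjl,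
      hlj, hji⟩

theorem invNum_insertMax : invNum (insertMax m (k, σ)) = invNum σ + (m - k) := by
  rw [invNum_eq_sum, invNum_eq_sum, Fin.sum_univ_succAbove _ k, add_comm]
  congr 1
  · refine Finset.sum_congr rfl fun a _ => ?_
    rw [Fin.sum_univ_succAbove _ k]
    simp [Fin.succAbove_lt_succAbove_iff, Fin.le_last]
  · rw [← Finset.card_filter]
    trans (Finset.Ioi k).card
    · congr 1
      ext b
      simp only [Finset.mem_filter, Finset.mem_univ, true_and, Finset.mem_Ioi,
        insertMax_apply_self, and_iff_left_iff_imp]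
      refine fun hkb => Fin.lt_last_iff_ne_last.2 fun h => hkb.ne' ?_
      exact (insertMax m (k, σ)).injective (h.trans (insertMax_apply_self k σ).symm)
    · simp

end InsertMax

theorem sum_Tset_succ {β : Type*} [AddCommMonoid β] {m : ℕ} (F : Perm (Fin (m + 1)) → β) :
    ∑ π ∈ Tset (m + 1), F π =
      ∑ k : Fin (m + 1), ∑ σ ∈ Tset m with ldes σ ≤ k, F (insertMax m (k, σ)) := by
  simp only [Tset, Finset.sum_filter, Finset.filter_filter]
  rw [← (insertMax m).sum_comp, Fintype.sum_prod_type]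
  simp only [avoids321_insertMax_iff]

section LdesCoeff

variable {R : Type*} [CommSemiring R]

/-- The coefficient of `q ^ ℓ` in `∑ π ∈ Tset M, t ^ invNum π * q ^ ldes π`. -/
def ldesCoeff (t : R) (M ℓ : ℕ) : R := ∑ π ∈ Tset M with ldes π = ℓ, t ^ invNum π

theorem sum_Tset_eq_sum_ldesCoeff (t : R) (f : ℕ → R) (M : ℕ) :
    ∑ π ∈ Tset M, t ^ invNum π * f (ldes π) =
      ∑ ℓ ∈ range (M + 1), ldesCoeff t M ℓ * f ℓ := by
  rw [← Finset.sum_fiberwise_of_maps_to (g := ldes) (t := range (M + 1))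
    fun π _ => Finset.mem_range.2 (by have := ldes_le π; omega)]
  refine Finset.sum_congr rfl fun ℓ _ => ?_
  rw [ldesCoeff, Finset.sum_mul]
  exact Finset.sum_congr rfl fun π hπ => by rw [(Finset.mem_filter.1 hπ).2]

theorem sum_filter_ldes_le (t : R) (M j : ℕ) :
    ∑ π ∈ Tset M with ldes π ≤ j, t ^ invNum π =
      ∑ ℓ ∈ range (j + 1), ldesCoeff t M ℓ := by
  rw [← Finset.sum_fiberwise_of_maps_to (g := ldes) (t := range (j + 1))
    fun π hπ => Finset.mem_range.2 (Nat.lt_succ_of_le (Finset.mem_filter.1 hπ).2)]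
  refine Finset.sum_congr rfl fun ℓ hℓ => ?_
  rw [ldesCoeff, Finset.filter_filter]
  refine Finset.sum_congr (Finset.filter_congr fun π _ => ?_) fun _ _ => rfl
  have := Finset.mem_range.1 hℓ
  constructor <;> omega

theorem ldesCoeff_succ (t : R) (m ℓ : ℕ) :
    ldesCoeff t (m + 1) ℓ = ldesCoeff t m ℓ + ∑ j ∈ range m,
      if j + 1 = ℓ then t ^ (m - j) * ∑ i ∈ range (j + 1), ldesCoeff t m i else 0 := by
  rw [ldesCoeff, Finset.sum_filter, sum_Tset_succ, Fin.sum_univ_castSucc, add_comm,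
    ← Fin.sum_univ_eq_sum_range]
  congr 1
  · have hall : ∀ σ : Perm (Fin m), ldes σ ≤ m := fun σ => (ldes_le σ).trans (Nat.sub_le m 1)
    simp only [ldes_insertMax_last, invNum_insertMax, Fin.val_last, Nat.sub_self, add_zero,
      ldesCoeff, Finset.sum_filter, hall, if_true]
  · refine Finset.sum_congr rfl fun j _ => ?_
    have hldes : ∀ σ ∈ (Tset m).filter (ldes · ≤ j), ldes (insertMax m (j.castSucc, σ)) = j + 1 :=
      fun σ hσ => ldes_insertMax_of_lt _ _ (by simp) (Finset.mem_filter.1 hσ).2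
    rw [← sum_filter_ldes_le, Finset.mul_sum, Fin.val_castSucc]
    split_ifs with hj
    · refine Finset.sum_congr rfl fun σ hσ => ?_
      rw [hldes σ hσ, if_pos hj, invNum_insertMax, pow_add, mul_comm, Fin.val_castSucc]
    · exact Finset.sum_eq_zero fun σ hσ => by rw [hldes σ hσ, if_neg hj]

theorem ldesCoeff_succ_zero (t : R) (m : ℕ) : ldesCoeff t (m + 1) 0 = ldesCoeff t m 0 := by
  simp [ldesCoeff_succ t m 0]

theorem ldesCoeff_succ_succ (t : R) (m j : ℕ) :
    ldesCoeff t (m + 1) (j + 1) = ldesCoeff t m (j + 1) +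
      if j < m then t ^ (m - j) * ∑ i ∈ range (j + 1), ldesCoeff t m i else 0 := by
  simp [ldesCoeff_succ t m (j + 1)]

theorem ldesCoeff_eq_zero (t : R) {m ℓ : ℕ} (h : m < ℓ) : ldesCoeff t (m + 1) ℓ = 0 := by
  rw [ldesCoeff, Finset.filter_false_of_mem fun π _ => by have := ldes_le π; omega,
    Finset.sum_empty]

theorem ldesCoeff_zero_left (t : R) (ℓ : ℕ) : ldesCoeff t 0 ℓ = if ℓ = 0 then 1 else 0 := by
  have hldes : ∀ π : Perm (Fin 0), ldes π = 0 := fun π => Nat.le_zero.1 (ldes_le π)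
  have hT : Tset 0 = Finset.univ := Finset.filter_true_of_mem fun π _ => by simp [Avoids321]
  split_ifs with hℓ <;> simp [ldesCoeff, hT, hldes, invNum, eq_comm, hℓ]

theorem ldesCoeff_one_succ {m i : ℕ} (h : i ≤ m) :
    ldesCoeff (1 : R) (m + 1) i = ∑ ℓ ∈ range (i + 1), ldesCoeff 1 m ℓ := by
  cases i with
  | zero => rw [ldesCoeff_succ_zero, Finset.sum_range_one]
  | succ i => rw [ldesCoeff_succ_succ, if_pos (Nat.lt_of_succ_le h), one_pow, one_mul,
      Finset.sum_range_succ _ (i + 1), add_comm]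

end LdesCoeff

def OddRowFormula (n : ℕ) : Prop :=
  ∀ i, ldesCoeff (-1 : ℤ) (2 * n + 1) (2 * i) = ldesCoeff (1 : ℤ) n i ∧
    ldesCoeff (-1 : ℤ) (2 * n + 1) (2 * i + 1) = 0

def EvenRowFormula (n : ℕ) : Prop :=
  ∀ i, ldesCoeff (-1 : ℤ) (2 * n + 2) (2 * i) = ldesCoeff (1 : ℤ) (n + 1) i ∧
    ldesCoeff (-1 : ℤ) (2 * n + 2) (2 * i + 1) = -ldesCoeff (1 : ℤ) (n + 1) i

theorem oddRowFormula_zero : OddRowFormula 0 := by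
  refine fun i => ⟨?_, ldesCoeff_eq_zero _ (by omega)⟩
  cases i with
  | zero => simp [ldesCoeff_succ_zero, ldesCoeff_zero_left]
  | succ i => rw [ldesCoeff_eq_zero _ (by omega), ldesCoeff_zero_left, if_neg (by omega)]

theorem EvenRowFormula.of_odd {n : ℕ} (h : OddRowFormula n) : EvenRowFormula n := by
  have hsum := Finset.sum_range_two_mul_of_odd_eq_zero h
  intro i
  constructor
  · cases i with
    | zero =>
      rw [mul_zero, ldesCoeff_succ_zero _ (2 * n + 1), ldesCoeff_succ_zero _ n]
      exact (h 0).1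
    | succ i =>
      rw [show 2 * (i + 1) = 2 * i + 1 + 1 by ring, ldesCoeff_succ_succ _ (2 * n + 1),
        ldesCoeff_succ_succ _ n, show 2 * i + 1 + 1 = 2 * (i + 1) by ring, (h _).1, hsum]
      by_cases hi : i < n
      · rw [if_pos (by omega), if_pos hi, one_pow,
          (Even.neg_one_pow ⟨n - i, by omega⟩ : (-1 : ℤ) ^ (2 * n + 1 - (2 * i + 1)) = 1)]
      · rw [if_neg (by omega), if_neg hi]
  · rw [ldesCoeff_succ_succ _ (2 * n + 1), (h i).2, zero_add, Finset.sum_range_succ, hsum, (h i).1,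
      ← Finset.sum_range_succ]
    by_cases hi : i ≤ n
    · have hpow : (-1 : ℤ) ^ (2 * n + 1 - 2 * i) = -1 := Odd.neg_one_pow ⟨n - i, by omega⟩
      rw [if_pos (by omega), hpow, neg_one_mul, ldesCoeff_one_succ hi]
    · rw [if_neg (by omega), ldesCoeff_eq_zero _ (by omega), neg_zero]

theorem OddRowFormula.succ_of_even {n : ℕ} (h : EvenRowFormula n) : OddRowFormula (n + 1) := by
  have hsum := Finset.sum_range_two_mul_of_odd_eq_neg h
  rw [OddRowFormula, show 2 * (n + 1) + 1 = 2 * n + 2 + 1 by ring]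
  intro i
  constructor
  · cases i with
    | zero => rw [mul_zero, ldesCoeff_succ_zero]; exact (h 0).1
    | succ i =>
      rw [show 2 * (i + 1) = 2 * i + 1 + 1 by ring, ldesCoeff_succ_succ,
        show 2 * i + 1 + 1 = 2 * (i + 1) by ring, (h _).1, hsum, mul_zero, ite_self, add_zero]
  · rw [ldesCoeff_succ_succ, (h i).2, Finset.sum_range_succ, hsum, (h i).1, zero_add]
    by_cases hi : i ≤ n
    · have hpow : (-1 : ℤ) ^ (2 * n + 2 - 2 * i) = 1 := Even.neg_one_pow ⟨n + 1 - i, by omega⟩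
      rw [if_pos (by omega), hpow, one_mul, neg_add_cancel]
    · rw [if_neg (by omega), ldesCoeff_eq_zero _ (by omega), neg_zero, add_zero]

theorem oddRowFormula (n : ℕ) : OddRowFormula n := by
  induction n with
  | zero => exact oddRowFormula_zero
  | succ n ih => exact OddRowFormula.succ_of_even (EvenRowFormula.of_odd ih)

theorem signed_ldes_odd (n : ℕ) (q : ℤ) :
    ∑ π ∈ Tset (2 * n + 1), (-1 : ℤ) ^ invNum π * q ^ ldes π =
      ∑ σ ∈ Tset n, q ^ (2 * ldes σ) := by
  have hrow := oddRowFormula n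
  calc ∑ π ∈ Tset (2 * n + 1), (-1 : ℤ) ^ invNum π * q ^ ldes π
      = ∑ ℓ ∈ range (2 * (n + 1)), ldesCoeff (-1) (2 * n + 1) ℓ * q ^ ℓ :=
        sum_Tset_eq_sum_ldesCoeff _ (q ^ ·) _
    _ = ∑ i ∈ range (n + 1), ldesCoeff 1 n i * (q ^ 2) ^ i :=
        Finset.sum_range_two_mul_of_odd_eq_zero
          (fun i => by rw [(hrow i).1, (hrow i).2, zero_mul, pow_mul]; exact ⟨rfl, rfl⟩) _
    _ = ∑ σ ∈ Tset n, q ^ (2 * ldes σ) := by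
        rw [← sum_Tset_eq_sum_ldesCoeff]
        simp only [one_pow, one_mul, pow_mul]
end

section
/- The sum over 321-avoiding permutations π of S_{2n} of sign(π)·q^{ldes(π)} equals (1-q) times the sum over 321-avoiding permutations σ of S_n of q^{2·ldes(σ)}, for all n ≥ 1. -/
open Finset

namespace SLE

variable {m : ℕ}

/-- insert the max value at position `j`. -/
def ins (j : Fin (m+1)) (σ : Equiv.Perm (Fin m)) : Equiv.Perm (Fin (m+1)) :=
  (finSuccEquiv' j).trans ((σ.optionCongr).trans (finSuccEquiv' (Fin.last m)).symm)

@[simp] lemma ins_self (j : Fin (m+1)) (σ : Equiv.Perm (Fin m)) :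
    ins j σ j = Fin.last m := by
  simp [ins, finSuccEquiv'_at]

@[simp] lemma ins_succAbove (j : Fin (m+1)) (σ : Equiv.Perm (Fin m)) (k : Fin m) :
    ins j σ (j.succAbove k) = (σ k).castSucc := by
  simp [ins, finSuccEquiv'_succAbove, Fin.succAbove_last]

lemma ins_injective : Function.Injective
    (fun p : Fin (m+1) × Equiv.Perm (Fin m) => ins p.1 p.2) := by
  rintro ⟨j, σ⟩ ⟨j', σ'⟩ h
  simp only at h
  have hj : j = j' := by
    have h1 : ins j σ j = Fin.last m := ins_self j σ
    have h2 : ins j' σ' j' = Fin.last m := ins_self j' σ'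
    rw [h] at h1
    exact (ins j' σ').injective (h1.trans h2.symm)
  subst hj
  have hσ : σ = σ' := by
    ext k
    have := congrArg (fun τ : Equiv.Perm (Fin (m+1)) => τ (j.succAbove k)) h
    simp only [ins_succAbove] at this
    exact congrArg Fin.val (Fin.castSucc_injective _ this)
  simp [hσ]

lemma ins_bijective : Function.Bijective
    (fun p : Fin (m+1) × Equiv.Perm (Fin m) => ins p.1 p.2) := by
  rw [Fintype.bijective_iff_injective_and_card]
  refine ⟨ins_injective, ?_⟩
  simp [Fintype.card_perm, Nat.factorial_succ]

variable {m : ℕ}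

lemma succAbove_val (j : Fin (m+1)) (k : Fin m) :
    (j.succAbove k).val = if k.val < j.val then k.val else k.val + 1 := by
  rcases lt_or_ge (k.castSucc) j with h | h
  · rw [Fin.succAbove_of_castSucc_lt _ _ h, if_pos (by simpa [Fin.lt_def] using h)]
    rfl
  · rw [Fin.succAbove_of_le_castSucc _ _ h, if_neg (by simp [Fin.le_def] at h; omega)]
    rfl

lemma pval_eq {n : ℕ} (π : Equiv.Perm (Fin n)) (i : ℕ) (h : i - 1 < n) :
    pval π i = (π ⟨i - 1, h⟩ : ℕ) + 1 := dif_pos h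

lemma pval_le {n : ℕ} (π : Equiv.Perm (Fin n)) (i : ℕ) (h : i - 1 < n) :
    pval π i ≤ n := by
  rw [pval_eq π i h]
  exact (π ⟨i - 1, h⟩).isLt

lemma mem_desSet_iff {n : ℕ} (π : Equiv.Perm (Fin n)) (i : ℕ) :
    i ∈ desSet π ↔ 1 ≤ i ∧ i ≤ n - 1 ∧ ∃ (h1 : i - 1 < n) (h2 : i < n),
      π ⟨i, h2⟩ < π ⟨i - 1, h1⟩ := by
  unfold desSet
  rw [Finset.mem_filter, Finset.mem_Icc]
  constructor
  · rintro ⟨⟨hi1, hi2⟩, hlt⟩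
    have h1 : i - 1 < n := by omega
    have h2 : i < n := by omega
    refine ⟨hi1, hi2, h1, h2, ?_⟩
    rw [pval_eq π (i+1) (by simpa using h2), pval_eq π i h1] at hlt
    simp only [Nat.add_sub_cancel] at hlt
    exact Fin.lt_def.2 (by omega)
  · rintro ⟨hi1, hi2, h1, h2, hlt⟩
    refine ⟨⟨hi1, hi2⟩, ?_⟩
    rw [pval_eq π (i+1) (by simpa using h2), pval_eq π i h1]
    simp only [Nat.add_sub_cancel]
    have := Fin.lt_def.1 hlt
    omega

lemma ldes_le {n : ℕ} (π : Equiv.Perm (Fin n)) : ldes π ≤ n - 1 := by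
  apply Finset.sup_le
  intro i hi
  rw [mem_desSet_iff] at hi
  exact hi.2.1

lemma le_ldes_of_mem {n : ℕ} {π : Equiv.Perm (Fin n)} {i : ℕ} (h : i ∈ desSet π) :
    i ≤ ldes π := Finset.le_sup (f := id) h

/-- an inversion with both positions ≥ a forces a descent at position ≥ a (1-based ≥ a+1). -/
lemma exists_descent {n : ℕ} (τ : Equiv.Perm (Fin n)) :
    ∀ d (k l : Fin n), l.val - k.val ≤ d → k < l → τ l < τ k →
      ∃ i ∈ desSet τ, k.val + 1 ≤ i := by
  intro d
  induction d with
  | zero =>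
    intro k l h hkl _
    exact absurd (Fin.lt_def.1 hkl) (by omega)
  | succ d ih =>
    intro k l h hkl hv
    have hkl' := Fin.lt_def.1 hkl
    have hk1 : k.val + 1 < n := by omega
    set k' : Fin n := ⟨k.val + 1, hk1⟩ with hk'
    rcases lt_or_ge (τ k') (τ k) with hd | hd
    · refine ⟨k.val + 1, ?_, le_refl _⟩
      rw [mem_desSet_iff]
      exact ⟨by omega, by omega, by omega, by simpa using hk1, by simpa using hd⟩
    · by_cases hke : k' = l
      · exact absurd hv (by rw [← hke]; exact not_lt.2 hd)
      · have hk'l : k' < l := by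
          rw [Fin.lt_def]
          have := Fin.val_ne_of_ne hke
          simp only [hk'] at *
          omega
        obtain ⟨i, hi, hle⟩ := ih k' l (by simp [hk']; omega) hk'l (lt_of_lt_of_le hv hd)
        exact ⟨i, hi, by simp [hk'] at hle; omega⟩


lemma pval_ins (j : Fin (m+1)) (σ : Equiv.Perm (Fin m)) (i : ℕ)
    (h1 : 1 ≤ i) (h2 : i ≤ m+1) :
    pval (ins j σ) i =
      if i = j.val + 1 then m + 1
      else if i ≤ j.val then pval σ i else pval σ (i-1) := by
  have hi : i - 1 < m + 1 := by omega
  rw [pval_eq _ i hi]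
  by_cases hij : i = j.val + 1
  · have : (⟨i - 1, hi⟩ : Fin (m+1)) = j := Fin.ext (by simp; omega)
    rw [this, ins_self, if_pos hij]
    simp [Fin.val_last]
  · have hne : (⟨i - 1, hi⟩ : Fin (m+1)) ≠ j := fun h => hij (by
      have := congrArg Fin.val h; simp at this; omega)
    obtain ⟨k, hk⟩ := Fin.exists_succAbove_eq hne
    rw [← hk, ins_succAbove, if_neg hij]
    have hkv : (if k.val < j.val then k.val else k.val + 1) = i - 1 := by
      rw [← succAbove_val j k, hk]
    simp only [Fin.coe_castSucc]
    by_cases hle : i ≤ j.val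
    · rw [if_pos hle]
      have hkval : k.val = i - 1 := by
        by_cases h : k.val < j.val
        · rw [if_pos h] at hkv; omega
        · rw [if_neg h] at hkv; omega
      have him : i - 1 < m := by omega
      rw [pval_eq σ i him]
      have hkk : k = ⟨i - 1, him⟩ := Fin.ext hkval
      rw [hkk]
    · rw [if_neg hle]
      have hkval : k.val = i - 2 := by
        by_cases h : k.val < j.val
        · rw [if_pos h] at hkv; omega
        · rw [if_neg h] at hkv; omega
      have him : i - 1 - 1 < m := by omega
      rw [pval_eq σ (i-1) him]
      have hkk : k = ⟨i - 1 - 1, him⟩ := Fin.ext (show k.val = i - 1 - 1 by omega)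
      rw [hkk]

lemma mem_desSet_simple {n : ℕ} (τ : Equiv.Perm (Fin n)) (i : ℕ) :
    i ∈ desSet τ ↔ (1 ≤ i ∧ i ≤ n - 1) ∧ pval τ (i+1) < pval τ i := by
  unfold desSet; rw [Finset.mem_filter, Finset.mem_Icc]

lemma mem_desSet_ins (j : Fin (m+1)) (σ : Equiv.Perm (Fin m)) (i : ℕ) :
    i ∈ desSet (ins j σ) ↔
      (i ∈ desSet σ ∧ i + 1 ≤ j.val) ∨ (i = j.val + 1 ∧ i ≤ m) ∨
      (i - 1 ∈ desSet σ ∧ j.val + 2 ≤ i) := by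
  have hjm : j.val ≤ m := Fin.is_le j
  rw [mem_desSet_simple]
  simp only [Nat.add_sub_cancel]
  have hple : ∀ a, 1 ≤ a → a ≤ m → pval σ a ≤ m := fun a _ ha2 => pval_le σ a (by omega)
  constructor
  · rintro ⟨⟨hi1, hi2⟩, hlt⟩
    have hi2' : i ≤ m := by omega
    rw [pval_ins j σ (i+1) (by omega) (by omega), pval_ins j σ i hi1 (by omega)] at hlt
    simp only [Nat.add_sub_cancel] at hlt
    have hp1 := hple i hi1 hi2'
    split_ifs at hlt with h1 h2 h3 h4 h5 h6 h7 h8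
    all_goals try omega
    · -- i+1 ≤ j, i ≤ j : descent of σ at i
      left
      refine ⟨(mem_desSet_simple σ i).2 ⟨⟨hi1, by omega⟩, hlt⟩, by omega⟩
    · -- i > j+1
      right; right
      have hge : j.val + 2 ≤ i := by omega
      refine ⟨(mem_desSet_simple σ (i-1)).2 ⟨⟨by omega, by omega⟩, ?_⟩, hge⟩
      have hii : i - 1 + 1 = i := by omega
      rw [hii]
      exact hlt
  · rintro (⟨hd, hA⟩ | ⟨hC, hi2'⟩ | ⟨hd, hge⟩)
    · rw [mem_desSet_simple] at hd
      obtain ⟨⟨hi1, hi2⟩, hlt⟩ := hd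
      refine ⟨⟨hi1, by omega⟩, ?_⟩
      rw [pval_ins j σ (i+1) (by omega) (by omega), pval_ins j σ i hi1 (by omega)]
      rw [if_neg (by omega : ¬ (i + 1 = j.val + 1)), if_pos hA,
        if_neg (by omega : ¬ (i = j.val + 1)), if_pos (by omega : i ≤ j.val)]
      exact hlt
    · subst hC
      have hjlt : j.val + 1 ≤ m := hi2'
      refine ⟨⟨by omega, by omega⟩, ?_⟩
      rw [pval_ins j σ _ (by omega) (by omega), pval_ins j σ _ (by omega) (by omega)]
      rw [if_pos rfl, if_neg (by omega : ¬ (j.val + 1 + 1 = j.val + 1)),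
        if_neg (by omega : ¬ (j.val + 1 + 1 ≤ j.val))]
      simp only [Nat.add_sub_cancel]
      have := hple (j.val + 1) (by omega) (by omega)
      omega
    · rw [mem_desSet_simple] at hd
      obtain ⟨⟨hi1, hi2⟩, hlt⟩ := hd
      have hii : i - 1 + 1 = i := by omega
      rw [hii] at hlt
      refine ⟨⟨by omega, by omega⟩, ?_⟩
      rw [pval_ins j σ (i+1) (by omega) (by omega), pval_ins j σ i (by omega) (by omega)]
      rw [if_neg (by omega : ¬ (i + 1 = j.val + 1)), if_neg (by omega : ¬ (i + 1 ≤ j.val)),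
        if_neg (by omega : ¬ (i = j.val + 1)), if_neg (by omega : ¬ (i ≤ j.val))]
      simp only [Nat.add_sub_cancel]
      exact hlt

lemma ldes_ins_last (σ : Equiv.Perm (Fin m)) : ldes (ins (Fin.last m) σ) = ldes σ := by
  unfold ldes
  congr 1
  ext i
  rw [mem_desSet_ins]
  simp only [Fin.val_last]
  constructor
  · rintro (⟨hd, _⟩ | ⟨hC, hle⟩ | ⟨hd, hge⟩)
    · exact hd
    · omega
    · have := ((mem_desSet_simple σ (i-1)).1 hd).1
      omega
  · intro hd
    have h := ((mem_desSet_simple σ i).1 hd).1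
    exact Or.inl ⟨hd, by omega⟩

lemma ldes_ins_lt (j : Fin (m+1)) (σ : Equiv.Perm (Fin m)) (hj : j.val < m)
    (h : ldes σ ≤ j.val) : ldes (ins j σ) = j.val + 1 := by
  apply le_antisymm
  · apply Finset.sup_le
    intro i hi
    rw [mem_desSet_ins] at hi
    rcases hi with ⟨hd, hA⟩ | ⟨hC, _⟩ | ⟨hd, hge⟩
    · simp only [id]; omega
    · simp only [id]; omega
    · exfalso
      have := le_ldes_of_mem hd
      omega
  · exact Finset.le_sup (f := id) ((mem_desSet_ins j σ (j.val+1)).2 (Or.inr (Or.inl ⟨rfl, by omega⟩)))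

lemma ldes_gt_of_desc {n : ℕ} {σ : Equiv.Perm (Fin n)} {J : ℕ} (h : ¬ ldes σ ≤ J) :
    ∃ i ∈ desSet σ, J < i := by
  by_contra hc
  push_neg at hc
  exact h (Finset.sup_le fun i hi => hc i hi)

lemma avoids_ins_iff (j : Fin (m+1)) (σ : Equiv.Perm (Fin m)) :
    Avoids321 (ins j σ) ↔ (Avoids321 σ ∧ ldes σ ≤ j.val) := by
  constructor
  · intro hA
    constructor
    · intro ⟨a, b, c, hab, hbc, h1, h2⟩
      refine hA ⟨j.succAbove a, j.succAbove b, j.succAbove c,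
        (Fin.succAbove_lt_succAbove_iff).2 hab, (Fin.succAbove_lt_succAbove_iff).2 hbc, ?_, ?_⟩
      · rw [ins_succAbove, ins_succAbove]
        exact Fin.castSucc_lt_castSucc_iff.2 h1
      · rw [ins_succAbove, ins_succAbove]
        exact Fin.castSucc_lt_castSucc_iff.2 h2
    · by_contra h
      obtain ⟨i, hi, hJi⟩ := ldes_gt_of_desc h
      rw [mem_desSet_iff] at hi
      obtain ⟨hi1, hi2, hm1, hm2, hlt⟩ := hi
      set b : Fin m := ⟨i - 1, hm1⟩
      set c : Fin m := ⟨i, hm2⟩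
      have hbJ : j.val ≤ b.val := by simp [b]; omega
      refine hA ⟨j, j.succAbove b, j.succAbove c, ?_, ?_, ?_, ?_⟩
      · rw [Fin.lt_def, succAbove_val]
        split_ifs with h'
        · omega
        · simp [b]; omega
      · exact (Fin.succAbove_lt_succAbove_iff).2 (by rw [Fin.lt_def]; simp [b, c]; omega)
      · rw [ins_succAbove, ins_succAbove]
        exact Fin.castSucc_lt_castSucc_iff.2 hlt
      · rw [ins_succAbove, ins_self]
        exact Fin.castSucc_lt_last _
  · rintro ⟨hA, hld⟩ ⟨a, b, c, hab, hbc, h1, h2⟩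
    have hbj : b ≠ j := by
      intro hb
      rw [hb, ins_self] at h2
      exact absurd h2 (not_lt.2 (Fin.le_last _))
    have hcj : c ≠ j := by
      intro hc
      rw [hc, ins_self] at h1
      have : ins j σ b ≤ Fin.last m := Fin.le_last _
      exact absurd h1 (not_lt.2 this)
    obtain ⟨kb, hkb⟩ := Fin.exists_succAbove_eq hbj
    obtain ⟨kc, hkc⟩ := Fin.exists_succAbove_eq hcj
    have hkbc : kb < kc := by
      rw [← hkb, ← hkc] at hbc
      exact (Fin.succAbove_lt_succAbove_iff).1 hbc
    have hvcb : σ kc < σ kb := by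
      rw [← hkb, ← hkc, ins_succAbove, ins_succAbove] at h1
      exact Fin.castSucc_lt_castSucc_iff.1 h1
    by_cases haj : a = j
    · -- a = j : max as the '3'; inversion in σ with positions ≥ j
      have hkbJ : j.val ≤ kb.val := by
        rw [haj, ← hkb] at hab
        have := Fin.lt_def.1 hab
        rw [succAbove_val] at this
        split_ifs at this with h'
        · omega
        · omega
      obtain ⟨i, hi, hki⟩ := exists_descent σ m kb kc (by omega) hkbc hvcb
      have := le_ldes_of_mem hi
      omega
    · obtain ⟨ka, hka⟩ := Fin.exists_succAbove_eq haj
      have hkab : ka < kb := by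
        rw [← hka, ← hkb] at hab
        exact (Fin.succAbove_lt_succAbove_iff).1 hab
      have hvba : σ kb < σ ka := by
        rw [← hka, ← hkb, ins_succAbove, ins_succAbove] at h2
        exact Fin.castSucc_lt_castSucc_iff.1 h2
      exact hA ⟨ka, kb, kc, hkab, hkbc, hvcb, hvba⟩

lemma invNum_ins (j : Fin (m+1)) (σ : Equiv.Perm (Fin m)) :
    invNum (ins j σ) = invNum σ + (m - j.val) := by
  classical
  set π := ins j σ with hπ
  unfold invNum
  set P : Fin (m+1) × Fin (m+1) → Prop := fun q => q.1 < q.2 ∧ π q.2 < π q.1 with hP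
  have hsplit := Finset.card_filter_add_card_filter_not
    (s := Finset.univ.filter P) (p := fun q : Fin (m+1) × Fin (m+1) => q.1 = j)
  have hlast : ∀ x : Fin (m+1), x ≠ j → π x < Fin.last m := by
    intro x hx
    refine lt_of_le_of_ne (Fin.le_last _) (fun h => hx ?_)
    have : π x = π j := by rw [ins_self]; exact h
    exact π.injective this
  have hIoi : (Finset.Ioi j).card = m - j.val := by rw [Fin.card_Ioi]; omega
  have hc1 : ((Finset.univ.filter P).filter (fun q => q.1 = j)).card = m - j.val := by
    rw [← hIoi]
    apply Finset.card_bij (fun q _ => q.2)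
    · rintro q hq
      simp only [Finset.mem_filter, hP] at hq
      rw [Finset.mem_Ioi]
      rw [← hq.2] at *
      exact hq.1.2.1
    · rintro q hq q' hq' h
      simp only [Finset.mem_filter, hP] at hq hq'
      exact Prod.ext (hq.2.trans hq'.2.symm) h
    · intro b hb
      rw [Finset.mem_Ioi] at hb
      refine ⟨(j, b), ?_, rfl⟩
      simp only [Finset.mem_filter, hP, Finset.mem_univ, true_and]
      refine ⟨⟨hb, ?_⟩, trivial⟩
      rw [ins_self]
      exact hlast b (ne_of_gt hb)
  have hc2 : ((Finset.univ.filter P).filter (fun q => ¬ q.1 = j)).card = invNum σ := by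
    unfold invNum
    symm
    apply Finset.card_bij (fun p _ => (j.succAbove p.1, j.succAbove p.2))
    · rintro p hp
      simp only [Finset.mem_filter, hP, Finset.mem_univ, true_and] at hp ⊢
      refine ⟨⟨(Fin.succAbove_lt_succAbove_iff).2 hp.1, ?_⟩, Fin.succAbove_ne j p.1⟩
      simp only [hπ, ins_succAbove]
      exact Fin.castSucc_lt_castSucc_iff.2 hp.2
    · rintro p hp p' hp' h
      have h1 := congrArg Prod.fst h
      have h2 := congrArg Prod.snd h
      simp only at h1 h2
      exact Prod.ext (Fin.succAbove_right_injective h1) (Fin.succAbove_right_injective h2)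
    · intro q hq
      simp only [Finset.mem_filter, hP, Finset.mem_univ, true_and] at hq
      obtain ⟨⟨hq1, hq2⟩, hqj⟩ := hq
      have hq2j : q.2 ≠ j := by
        intro h
        rw [h, ins_self] at hq2
        exact absurd hq2 (not_lt.2 (Fin.le_last _))
      obtain ⟨k1, hk1⟩ := Fin.exists_succAbove_eq hqj
      obtain ⟨k2, hk2⟩ := Fin.exists_succAbove_eq hq2j
      refine ⟨(k1, k2), ?_, by rw [hk1, hk2]⟩
      simp only [Finset.mem_filter, Finset.mem_univ, true_and]
      constructor
      · rw [← hk1, ← hk2] at hq1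
        exact (Fin.succAbove_lt_succAbove_iff).1 hq1
      · rw [← hk1, ← hk2, ins_succAbove, ins_succAbove] at hq2
        exact Fin.castSucc_lt_castSucc_iff.1 hq2
  show (Finset.univ.filter P).card = invNum σ + (m - j.val)
  omega

lemma master (F : ℕ → ℕ → ℤ) :
    ∑ π ∈ Tset (m+1), F (invNum π) (ldes π)
    = (∑ σ ∈ Tset m, F (invNum σ) (ldes σ))
    + ∑ J ∈ Finset.range m, ∑ σ ∈ (Tset m).filter (fun σ => ldes σ ≤ J),
        F (invNum σ + (m - J)) (J + 1) := by
  classical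
  have h1 : ∑ π ∈ Tset (m+1), F (invNum π) (ldes π)
      = ∑ π : Equiv.Perm (Fin (m+1)), if Avoids321 π then F (invNum π) (ldes π) else 0 := by
    rw [Tset, Finset.sum_filter]
  rw [h1, ← Function.Bijective.sum_comp ins_bijective
      (fun π => if Avoids321 π then F (invNum π) (ldes π) else 0)]
  rw [Fintype.sum_prod_type, Fin.sum_univ_castSucc]
  have hlast : (∑ σ : Equiv.Perm (Fin m),
      if Avoids321 (ins (Fin.last m) σ) then
        F (invNum (ins (Fin.last m) σ)) (ldes (ins (Fin.last m) σ)) else 0)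
      = ∑ σ ∈ Tset m, F (invNum σ) (ldes σ) := by
    rw [Tset, Finset.sum_filter]
    apply Finset.sum_congr rfl
    intro σ _
    by_cases hA : Avoids321 σ
    · rw [if_pos ((avoids_ins_iff _ _).2 ⟨hA, by
        have := ldes_le σ; simp only [Fin.val_last]; omega⟩), if_pos hA,
        invNum_ins, ldes_ins_last]
      simp [Fin.val_last]
    · rw [if_neg (fun h => hA ((avoids_ins_iff _ _).1 h).1), if_neg hA]
  have hcast : ∀ j0 : Fin m, (∑ σ : Equiv.Perm (Fin m),
      if Avoids321 (ins j0.castSucc σ) then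
        F (invNum (ins j0.castSucc σ)) (ldes (ins j0.castSucc σ)) else 0)
      = ∑ σ ∈ (Tset m).filter (fun σ => ldes σ ≤ j0.val),
          F (invNum σ + (m - j0.val)) (j0.val + 1) := by
    intro j0
    rw [Tset, Finset.filter_filter, Finset.sum_filter]
    apply Finset.sum_congr rfl
    intro σ _
    by_cases hA : Avoids321 σ ∧ ldes σ ≤ j0.val
    · rw [if_pos ((avoids_ins_iff _ _).2 ⟨hA.1, by
        simp only [Fin.coe_castSucc]; exact hA.2⟩), if_pos hA,
        invNum_ins, ldes_ins_lt _ _ (by simp only [Fin.coe_castSucc]; exact j0.isLt)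
          (by simp only [Fin.coe_castSucc]; exact hA.2)]
      simp [Fin.coe_castSucc]
    · rw [if_neg, if_neg hA]
      intro h
      have := (avoids_ins_iff _ _).1 h
      rw [Fin.coe_castSucc] at this
      exact hA this
  rw [hlast]
  have hsum2 : (∑ j0 : Fin m, ∑ σ : Equiv.Perm (Fin m),
      if Avoids321 (ins j0.castSucc σ) then
        F (invNum (ins j0.castSucc σ)) (ldes (ins j0.castSucc σ)) else 0)
      = ∑ J ∈ Finset.range m, ∑ σ ∈ (Tset m).filter (fun σ => ldes σ ≤ J),
          F (invNum σ + (m - J)) (J + 1) := by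
    rw [← Fin.sum_univ_eq_sum_range (fun J => ∑ σ ∈ (Tset m).filter (fun σ => ldes σ ≤ J),
          F (invNum σ + (m - J)) (J + 1)) m]
    exact Finset.sum_congr rfl (fun j0 _ => hcast j0)
  rw [hsum2, add_comm]

def tC (M k : ℕ) : ℤ := ∑ σ ∈ (Tset M).filter (fun σ => ldes σ = k), (-1 : ℤ)^(invNum σ)
def uC (M k : ℕ) : ℤ := ∑ σ ∈ (Tset M).filter (fun σ => ldes σ = k), (1 : ℤ)
def sT (M c : ℕ) : ℤ := ∑ k ∈ Finset.range (c+1), tC M k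
def sU (M c : ℕ) : ℤ := ∑ k ∈ Finset.range (c+1), uC M k

lemma filter_le_eq_sum (M : ℕ) (w : Equiv.Perm (Fin M) → ℤ) (c : ℕ) :
    ∑ σ ∈ (Tset M).filter (fun σ => ldes σ ≤ c), w σ
    = ∑ k ∈ Finset.range (c+1), ∑ σ ∈ (Tset M).filter (fun σ => ldes σ = k), w σ := by
  have hfib := Finset.sum_fiberwise_of_maps_to
    (s := (Tset M).filter (fun σ => ldes σ ≤ c)) (t := Finset.range (c+1))
    (g := fun σ => ldes σ) (f := w) (fun σ hσ => by
      rw [Finset.mem_filter] at hσ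
      exact Finset.mem_range.2 (by omega : ldes σ < c + 1))
  rw [← hfib]
  apply Finset.sum_congr rfl
  intro k hk
  rw [Finset.mem_range] at hk
  congr 1
  rw [Finset.filter_filter]
  apply Finset.filter_congr
  intro σ _
  constructor
  · exact fun h => h.2
  · exact fun h => ⟨by omega, h⟩

lemma total_eq_sum (M : ℕ) (w : Equiv.Perm (Fin M) → ℤ) (c : ℕ)
    (hc : ∀ σ : Equiv.Perm (Fin M), ldes σ < c) :
    ∑ σ ∈ Tset M, w σ
    = ∑ k ∈ Finset.range c, ∑ σ ∈ (Tset M).filter (fun σ => ldes σ = k), w σ :=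
  (Finset.sum_fiberwise_of_maps_to (fun σ _ => Finset.mem_range.2 (hc σ)) w).symm

lemma filter_ldes_empty (M k : ℕ) (h1 : 1 ≤ k) (h2 : M ≤ k) :
    (Tset M).filter (fun σ => ldes σ = k) = ∅ := by
  apply Finset.filter_eq_empty_iff.2
  intro σ _
  have := ldes_le σ
  omega

lemma tC_zero (M k : ℕ) (h1 : 1 ≤ k) (h2 : M ≤ k) : tC M k = 0 := by
  rw [tC, filter_ldes_empty M k h1 h2, Finset.sum_empty]

lemma uC_zero (M k : ℕ) (h1 : 1 ≤ k) (h2 : M ≤ k) : uC M k = 0 := by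
  rw [uC, filter_ldes_empty M k h1 h2, Finset.sum_empty]

lemma tC_rec (k : ℕ) (h1 : 1 ≤ k) (h2 : k ≤ m) :
    tC (m+1) k = tC m k + (-1)^(m - k + 1) * sT m (k-1) := by
  have hm := master (m := m) (F := fun i l => if l = k then (-1 : ℤ)^i else 0)
  rw [← Finset.sum_filter, ← Finset.sum_filter] at hm
  rw [tC, tC, hm]
  congr 1
  rw [Finset.sum_eq_single (k-1)]
  · have hc : k - 1 + 1 = k := by omega
    have hmk : m - (k-1) = m - k + 1 := by omega
    trans (∑ σ ∈ (Tset m).filter (fun σ => ldes σ ≤ k-1), (-1 : ℤ)^(invNum σ + (m - k + 1)))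
    · exact Finset.sum_congr rfl (fun σ _ => by rw [if_pos hc, hmk])
    · rw [filter_le_eq_sum, sT, Finset.mul_sum]
      apply Finset.sum_congr rfl
      intro i _
      rw [tC, Finset.mul_sum]
      exact Finset.sum_congr rfl (fun σ _ => by rw [pow_add]; ring)
  · intro J _ hJ
    apply Finset.sum_eq_zero
    intro σ _
    rw [if_neg (by omega)]
  · intro h
    exfalso
    exact h (Finset.mem_range.2 (by omega))

lemma tC_rec0 : tC (m+1) 0 = tC m 0 := by
  have hm := master (m := m) (F := fun i l => if l = 0 then (-1 : ℤ)^i else 0)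
  rw [← Finset.sum_filter, ← Finset.sum_filter] at hm
  rw [tC, tC, hm]
  rw [Finset.sum_eq_zero (fun J (_ : J ∈ Finset.range m) =>
    Finset.sum_eq_zero (fun σ _ => if_neg (by omega))), add_zero]

lemma uC_rec (k : ℕ) (h1 : 1 ≤ k) (h2 : k ≤ m) :
    uC (m+1) k = uC m k + sU m (k-1) := by
  have hm := master (m := m) (F := fun _ l => if l = k then (1 : ℤ) else 0)
  rw [← Finset.sum_filter, ← Finset.sum_filter] at hm
  rw [uC, uC, hm]
  congr 1
  rw [Finset.sum_eq_single (k-1)]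
  · have hc : k - 1 + 1 = k := by omega
    trans (∑ σ ∈ (Tset m).filter (fun σ => ldes σ ≤ k-1), (1 : ℤ))
    · exact Finset.sum_congr rfl (fun σ _ => by rw [if_pos hc])
    · rw [filter_le_eq_sum, sU]
      rfl
  · intro J _ hJ
    apply Finset.sum_eq_zero
    intro σ _
    rw [if_neg (by omega)]
  · intro h
    exfalso
    exact h (Finset.mem_range.2 (by omega))

lemma uC_rec0 : uC (m+1) 0 = uC m 0 := by
  have hm := master (m := m) (F := fun _ l => if l = 0 then (1 : ℤ) else 0)
  rw [← Finset.sum_filter, ← Finset.sum_filter] at hm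
  rw [uC, uC, hm]
  rw [Finset.sum_eq_zero (fun J (_ : J ∈ Finset.range m) =>
    Finset.sum_eq_zero (fun σ _ => if_neg (by omega))), add_zero]

lemma sT_succ (M c : ℕ) : sT M (c+1) = sT M c + tC M (c+1) := Finset.sum_range_succ _ _
lemma sU_succ (M c : ℕ) : sU M (c+1) = sU M c + uC M (c+1) := Finset.sum_range_succ _ _
lemma sT_zero' (M : ℕ) : sT M 0 = tC M 0 := Finset.sum_range_one _
lemma sU_zero' (M : ℕ) : sU M 0 = uC M 0 := Finset.sum_range_one _

lemma Tset_small (N : ℕ) (hN : N ≤ 1) : Tset N = Finset.univ := by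
  rw [Tset]
  apply Finset.filter_true_of_mem
  intro σ _
  rintro ⟨i, j, k, hij, hjk, -, -⟩
  have h1 := i.isLt
  have h2 := j.isLt
  have h3 := k.isLt
  have h4 := Fin.lt_def.1 hij
  have h5 := Fin.lt_def.1 hjk
  omega

lemma card_perm_small (N : ℕ) (hN : N ≤ 1) :
    (Finset.univ : Finset (Equiv.Perm (Fin N))).card = 1 := by
  rw [Finset.card_univ, Fintype.card_perm, Fintype.card_fin]
  interval_cases N <;> rfl

lemma invNum_one (σ : Equiv.Perm (Fin 1)) : invNum σ = 0 := by
  rw [invNum, Finset.card_eq_zero]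
  apply Finset.filter_eq_empty_iff.2
  rintro q - ⟨h1, -⟩
  have h2 := Fin.lt_def.1 h1
  have h3 := q.1.isLt
  have h4 := q.2.isLt
  omega

lemma uC_small (N : ℕ) (hN : N ≤ 1) (k : ℕ) : uC N k = if k = 0 then 1 else 0 := by
  by_cases hk : k = 0
  · subst hk
    rw [if_pos rfl, uC]
    have hf : (Tset N).filter (fun σ => ldes σ = 0) = Tset N := by
      apply Finset.filter_true_of_mem
      intro σ _
      have := ldes_le σ
      omega
    rw [hf, Tset_small N hN, Finset.sum_const, card_perm_small N hN]
    simp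
  · rw [if_neg hk, uC_zero N k (by omega) (by omega)]

lemma tC_one (k : ℕ) : tC 1 k = if k = 0 then 1 else 0 := by
  by_cases hk : k = 0
  · subst hk
    rw [if_pos rfl, tC]
    have hf : (Tset 1).filter (fun σ => ldes σ = 0) = Tset 1 := by
      apply Finset.filter_true_of_mem
      intro σ _
      have := ldes_le σ
      omega
    rw [hf]
    trans (∑ σ ∈ Tset 1, (1:ℤ))
    · exact Finset.sum_congr rfl (fun σ _ => by rw [invNum_one σ, pow_zero])
    · rw [Tset_small 1 (le_refl 1), Finset.sum_const, card_perm_small 1 (le_refl 1)]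
      simp
  · rw [if_neg hk, tC_zero 1 k (by omega) (by omega)]

lemma psum_odd (n : ℕ)
    (hO : ∀ k, tC (2*n+1) (2*k) = uC n k ∧ tC (2*n+1) (2*k+1) = 0) :
    ∀ c, sT (2*n+1) c = sU n (c/2) := by
  intro c
  induction c with
  | zero =>
    have h0 := (hO 0).1
    rw [show 2*0 = 0 from rfl] at h0
    rw [sT_zero', sU_zero', h0]
  | succ c ih =>
    rw [sT_succ, ih]
    rcases Nat.even_or_odd (c+1) with ⟨k, hk⟩ | ⟨k, hk⟩
    · have h1 : c + 1 = 2*k := by omega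
      have e2 : (c+1)/2 = k := by omega
      have e3 : c/2 = k - 1 := by omega
      rw [e3, e2, h1, (hO k).1]
      have hsu := sU_succ n (k-1)
      rw [show k - 1 + 1 = k from by omega] at hsu
      rw [hsu]
    · have h1 : c + 1 = 2*k+1 := by omega
      have e2 : (c+1)/2 = k := by omega
      have e3 : c/2 = k := by omega
      rw [e3, e2, h1, (hO k).2, add_zero]

lemma psum_even (N : ℕ)
    (hE : ∀ k, tC (2*N) (2*k) = uC N k ∧ tC (2*N) (2*k+1) = -uC N k) :
    ∀ c, sT (2*N) c = if c % 2 = 0 then uC N (c/2) else 0 := by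
  intro c
  induction c with
  | zero =>
    have h0 := (hE 0).1
    rw [show 2*0 = 0 from rfl] at h0
    rw [sT_zero', h0, if_pos rfl]
  | succ c ih =>
    rw [sT_succ, ih]
    rcases Nat.even_or_odd (c+1) with ⟨k, hk⟩ | ⟨k, hk⟩
    · have h1 : c + 1 = 2*k := by omega
      have hk1 : 1 ≤ k := by omega
      rw [if_neg (by omega), if_pos (by omega), show (c+1)/2 = k from by omega, h1,
        (hE k).1, zero_add]
    · have h1 : c + 1 = 2*k+1 := by omega
      rw [if_pos (by omega), if_neg (by omega), show c/2 = k from by omega, h1, (hE k).2]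
      ring

lemma uB (n : ℕ) (k : ℕ) (hk : k ≤ n) : uC (n+1) k = sU n k := by
  by_cases hk0 : k = 0
  · subst hk0
    rw [uC_rec0, sU_zero']
  · rw [uC_rec k (by omega) hk]
    have hsu := sU_succ n (k-1)
    rw [show k - 1 + 1 = k from by omega] at hsu
    rw [hsu]
    ring

lemma step_even (n : ℕ)
    (hO : ∀ k, tC (2*n+1) (2*k) = uC n k ∧ tC (2*n+1) (2*k+1) = 0) :
    ∀ k, tC (2*n+2) (2*k) = uC (n+1) k ∧ tC (2*n+2) (2*k+1) = -uC (n+1) k := by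
  have hps := psum_odd n hO
  intro k
  constructor
  · by_cases hk0 : k = 0
    · subst hk0
      rw [show 2*0 = 0 from rfl, show 2*n+2 = (2*n+1)+1 from by omega, tC_rec0]
      have h0 := (hO 0).1
      rw [show 2*0 = 0 from rfl] at h0
      rw [h0, ← uC_rec0]
    · by_cases hkn : k ≤ n
      · rw [show 2*n+2 = (2*n+1)+1 from by omega,
          tC_rec (m := 2*n+1) (2*k) (by omega) (by omega)]
        have hev : (-1:ℤ)^(2*n+1 - 2*k + 1) = 1 := Even.neg_one_pow ⟨n+1-k, by omega⟩
        have hst := hps (2*k-1)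
        rw [show (2*k-1)/2 = k-1 from by omega] at hst
        rw [hev, hst, (hO k).1, one_mul, uC_rec k (by omega) hkn]
      · rw [tC_zero (2*n+2) (2*k) (by omega) (by omega),
          uC_zero (n+1) k (by omega) (by omega)]
  · by_cases hkn : k ≤ n
    · rw [show 2*n+2 = (2*n+1)+1 from by omega,
        tC_rec (m := 2*n+1) (2*k+1) (by omega) (by omega)]
      have hod : (-1:ℤ)^(2*n+1 - (2*k+1) + 1) = -1 := Odd.neg_one_pow ⟨n-k, by omega⟩
      have hst := hps (2*k+1-1)
      rw [show (2*k+1-1)/2 = k from by omega] at hst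
      rw [hod, hst, (hO k).2, uB n k hkn]
      ring
    · rw [tC_zero (2*n+2) (2*k+1) (by omega) (by omega),
        uC_zero (n+1) k (by omega) (by omega), neg_zero]

lemma step_odd (N : ℕ)
    (hE : ∀ k, tC (2*N) (2*k) = uC N k ∧ tC (2*N) (2*k+1) = -uC N k) :
    ∀ k, tC (2*N+1) (2*k) = uC N k ∧ tC (2*N+1) (2*k+1) = 0 := by
  have hps := psum_even N hE
  intro k
  constructor
  · by_cases hk0 : k = 0
    · subst hk0
      rw [show 2*0 = 0 from rfl, tC_rec0 (m := 2*N)]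
      have h0 := (hE 0).1
      rw [show 2*0 = 0 from rfl] at h0
      rw [h0]
    · by_cases hkn : k ≤ N
      · rw [tC_rec (m := 2*N) (2*k) (by omega) (by omega)]
        have hst := hps (2*k-1)
        rw [if_neg (by omega)] at hst
        rw [hst, (hE k).1, mul_zero, add_zero]
      · rw [tC_zero (2*N+1) (2*k) (by omega) (by omega),
          uC_zero N k (by omega) (by omega)]
  · by_cases hkn : k + 1 ≤ N
    · rw [tC_rec (m := 2*N) (2*k+1) (by omega) (by omega)]
      have hev : (-1:ℤ)^(2*N - (2*k+1) + 1) = 1 := Even.neg_one_pow ⟨N-k, by omega⟩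
      have hst := hps (2*k+1-1)
      rw [if_pos (by omega), show (2*k+1-1)/2 = k from by omega] at hst
      rw [hev, hst, (hE k).2]
      ring
    · rw [tC_zero (2*N+1) (2*k+1) (by omega) (by omega)]

lemma allOt : ∀ n, ∀ k, tC (2*n+1) (2*k) = uC n k ∧ tC (2*n+1) (2*k+1) = 0 := by
  intro n
  induction n with
  | zero =>
    intro k
    rw [show 2*0+1 = 1 from rfl]
    constructor
    · rw [tC_one, uC_small 0 (by omega) k]
      by_cases hk : k = 0
      · subst hk; rw [show 2*0 = 0 from rfl]
      · rw [if_neg (by omega), if_neg hk]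
    · rw [tC_one, if_neg (by omega)]
  | succ n ih =>
    have hE : ∀ k, tC (2*(n+1)) (2*k) = uC (n+1) k ∧ tC (2*(n+1)) (2*k+1) = -uC (n+1) k := by
      rw [show 2*(n+1) = 2*n+2 from by omega]
      exact step_even n ih
    exact step_odd (n+1) hE

lemma range_pair (N : ℕ) (f : ℕ → ℤ) :
    ∑ k ∈ Finset.range (2*N), f k = ∑ i ∈ Finset.range N, (f (2*i) + f (2*i+1)) := by
  induction N with
  | zero => rfl
  | succ N ih =>
    rw [show 2*(N+1) = (2*N+1)+1 from by omega, Finset.sum_range_succ, Finset.sum_range_succ,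
      Finset.sum_range_succ, ih]
    ring

end SLE

theorem signed_ldes_even (n : ℕ) (hn : 1 ≤ n) (q : ℤ) :
    ∑ π ∈ Tset (2 * n), (-1 : ℤ) ^ invNum π * q ^ ldes π =
      (1 - q) * ∑ σ ∈ Tset n, q ^ (2 * ldes σ) := by
  have hE := SLE.step_even (n-1) (SLE.allOt (n-1))
  rw [show 2*(n-1)+2 = 2*n from by omega] at hE
  rw [show (n-1)+1 = n from by omega] at hE
  have hL : ∑ π ∈ Tset (2*n), (-1:ℤ)^invNum π * q^ldes π
      = ∑ k ∈ Finset.range (2*n), SLE.tC (2*n) k * q^k := by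
    rw [SLE.total_eq_sum (2*n) (fun π => (-1:ℤ)^invNum π * q^ldes π) (2*n)
      (fun σ => by have := SLE.ldes_le σ; omega)]
    apply Finset.sum_congr rfl
    intro k hk
    rw [SLE.tC, Finset.sum_mul]
    apply Finset.sum_congr rfl
    intro σ hσ
    rw [Finset.mem_filter] at hσ
    rw [hσ.2]
  have hR : ∑ σ ∈ Tset n, q^(2*ldes σ)
      = ∑ i ∈ Finset.range n, SLE.uC n i * q^(2*i) := by
    rw [SLE.total_eq_sum n (fun σ => q^(2*ldes σ)) n
      (fun σ => by have := SLE.ldes_le σ; omega)]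
    apply Finset.sum_congr rfl
    intro i hi
    rw [SLE.uC, Finset.sum_mul]
    apply Finset.sum_congr rfl
    intro σ hσ
    rw [Finset.mem_filter] at hσ
    rw [hσ.2, one_mul]
  rw [hL, hR, SLE.range_pair n (fun k => SLE.tC (2*n) k * q^k), Finset.mul_sum]
  apply Finset.sum_congr rfl
  intro i _
  rw [(hE i).1, (hE i).2]
  ring
end

section
/- For n ≥ 0, the number of even 321-avoiding permutations in S_{2n+1} minus the number of odd ones equals the n-th Catalan number C_n = (1/(n+1))·binom(2n,n). -/
open Finset

namespace SB

open Equiv Equiv.Perm Fin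

/-- value sequence extended beyond the range so that it is increasing there -/
def pv {n : ℕ} (π : Equiv.Perm (Fin n)) (i : ℕ) : ℕ :=
  if h : i < n then (π ⟨i, h⟩ : ℕ) else n + i

/-- 0-based descent positions -/
def desF {n : ℕ} (π : Equiv.Perm (Fin n)) : Finset ℕ :=
  (Finset.range n).filter (fun i => pv π (i + 1) < pv π i)

/-- last descent, as "position+1"; 0 if none -/
def LD {n : ℕ} (π : Equiv.Perm (Fin n)) : ℕ := (desF π).sup (· + 1)

def sgn {n : ℕ} (π : Equiv.Perm (Fin n)) : ℤ := (-1) ^ (invNum π)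

/-- insert the maximal value at position `p` -/
def ins {n : ℕ} (π' : Equiv.Perm (Fin n)) (p : Fin (n + 1)) : Equiv.Perm (Fin (n + 1)) :=
  (finSuccEquiv' p).trans ((Equiv.optionCongr π').trans (finSuccEquiv' (Fin.last n)).symm)

/-- remove the maximal value -/
def rem {n : ℕ} (π : Equiv.Perm (Fin (n + 1))) : Equiv.Perm (Fin n) :=
  Equiv.removeNone
    ((finSuccEquiv' (π.symm (Fin.last n))).symm.trans (π.trans (finSuccEquiv' (Fin.last n))))

@[simp] theorem ins_self {n : ℕ} (π' : Equiv.Perm (Fin n)) (p : Fin (n + 1)) :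
    ins π' p p = Fin.last n := by
  simp [ins]

@[simp] theorem ins_succAbove {n : ℕ} (π' : Equiv.Perm (Fin n)) (p : Fin (n + 1)) (j : Fin n) :
    ins π' p (p.succAbove j) = Fin.castSucc (π' j) := by
  simp [ins, ← Fin.succAbove_last]

theorem ins_symm_last {n : ℕ} (π' : Equiv.Perm (Fin n)) (p : Fin (n + 1)) :
    (ins π' p).symm (Fin.last n) = p := by
  rw [Equiv.symm_apply_eq]; simp

theorem castSucc_rem {n : ℕ} (π : Equiv.Perm (Fin (n + 1))) (j : Fin n) :
    Fin.castSucc (rem π j) = π ((π.symm (Fin.last n)).succAbove j) := by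
  have hne : π ((π.symm (Fin.last n)).succAbove j) ≠ Fin.last n := by
    intro h
    have h2 : (π.symm (Fin.last n)).succAbove j = π.symm (Fin.last n) := by
      apply π.injective; rw [h, Equiv.apply_symm_apply]
    exact Fin.succAbove_ne _ j h2
  obtain ⟨y, hy⟩ := Fin.exists_succAbove_eq hne
  have key : some (rem π j) =
      ((finSuccEquiv' (π.symm (Fin.last n))).symm.trans
        (π.trans (finSuccEquiv' (Fin.last n)))) (some j) := by
    apply Equiv.removeNone_some
    refine ⟨y, ?_⟩
    simp only [Equiv.trans_apply]
    rw [show ((finSuccEquiv' (π.symm (Fin.last n))).symm (some j))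
        = (π.symm (Fin.last n)).succAbove j from rfl, ← hy, finSuccEquiv'_succAbove]
  simp only [Equiv.trans_apply] at key
  rw [show ((finSuccEquiv' (π.symm (Fin.last n))).symm (some j))
      = (π.symm (Fin.last n)).succAbove j from rfl, ← hy, finSuccEquiv'_succAbove] at key
  rw [Option.some_injective _ key, ← Fin.succAbove_last_apply, hy]

theorem ins_rem {n : ℕ} (π : Equiv.Perm (Fin (n + 1))) :
    ins (rem π) (π.symm (Fin.last n)) = π := by
  apply Equiv.ext
  intro i
  rcases eq_or_ne i (π.symm (Fin.last n)) with rfl | h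
  · simp
  · obtain ⟨j, rfl⟩ := Fin.exists_succAbove_eq h
    rw [ins_succAbove, castSucc_rem]

theorem rem_ins {n : ℕ} (π' : Equiv.Perm (Fin n)) (p : Fin (n + 1)) :
    rem (ins π' p) = π' := by
  apply Equiv.ext
  intro j
  apply Fin.castSucc_injective
  rw [castSucc_rem, ins_symm_last, ins_succAbove]

theorem invNum_ins (π' : Equiv.Perm (Fin n)) (p : Fin (n + 1)) :
    invNum (ins π' p) = invNum π' + (n - p) := by
  classical
  set π := ins π' p with hπ
  have hset :
      (Finset.univ.filter (fun q : Fin (n+1) × Fin (n+1) => q.1 < q.2 ∧ π q.2 < π q.1)) =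
      ((Finset.univ.filter (fun q : Fin n × Fin n => q.1 < q.2 ∧ π' q.2 < π' q.1)).image
        (fun q => (p.succAbove q.1, p.succAbove q.2))) ∪
      ((Finset.Ioi p).image (fun b => (p, b))) := by
    ext ⟨a, b⟩
    simp only [mem_filter, mem_union, mem_image, mem_univ, true_and, Finset.mem_Ioi,
      Prod.mk.injEq, Prod.exists]
    constructor
    · rintro ⟨hab, hinv⟩
      rcases eq_or_ne a p with rfl | ha
      · exact Or.inr ⟨b, hab, rfl, rfl⟩
      · obtain ⟨i, rfl⟩ := Fin.exists_succAbove_eq ha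
        rcases eq_or_ne b p with rfl | hb
        · exfalso
          rw [ins_self, ins_succAbove] at hinv
          exact absurd hinv (not_lt.mpr (Fin.castSucc_lt_last _).le)
        · obtain ⟨j, rfl⟩ := Fin.exists_succAbove_eq hb
          rw [ins_succAbove, ins_succAbove, Fin.castSucc_lt_castSucc_iff] at hinv
          rw [Fin.succAbove_lt_succAbove_iff] at hab
          exact Or.inl ⟨i, j, ⟨hab, hinv⟩, rfl, rfl⟩
    · rintro (⟨i, j, ⟨hij, hinv⟩, rfl, rfl⟩ | ⟨b', hb', rfl, rfl⟩)
      · refine ⟨Fin.succAbove_lt_succAbove_iff.mpr hij, ?_⟩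
        rw [ins_succAbove, ins_succAbove, Fin.castSucc_lt_castSucc_iff]
        exact hinv
      · refine ⟨hb', ?_⟩
        obtain ⟨j, rfl⟩ := Fin.exists_succAbove_eq (ne_of_gt hb')
        rw [ins_self, ins_succAbove]
        exact Fin.castSucc_lt_last _
  have hdisj : Disjoint
      ((Finset.univ.filter (fun q : Fin n × Fin n => q.1 < q.2 ∧ π' q.2 < π' q.1)).image
        (fun q => (p.succAbove q.1, p.succAbove q.2)))
      ((Finset.Ioi p).image (fun b => (p, b))) := by
    rw [Finset.disjoint_left]
    rintro ⟨a, b⟩ h1 h2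
    simp only [mem_image, Prod.mk.injEq, Prod.exists, Finset.mem_Ioi] at h1 h2
    obtain ⟨i, j, _, rfl, rfl⟩ := h1
    obtain ⟨b', _, hp, _⟩ := h2
    exact Fin.succAbove_ne p i hp.symm
  have hinj1 : Set.InjOn (fun q : Fin n × Fin n => (p.succAbove q.1, p.succAbove q.2))
      ((Finset.univ.filter (fun q : Fin n × Fin n => q.1 < q.2 ∧ π' q.2 < π' q.1)) : Set (Fin n × Fin n)) := by
    rintro ⟨a, b⟩ _ ⟨c, d⟩ _ h
    simp only [Prod.mk.injEq] at h
    exact Prod.ext (Fin.succAbove_right_injective h.1) (Fin.succAbove_right_injective h.2)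
  have hinj2 : Set.InjOn (fun b : Fin (n+1) => (p, b)) ((Finset.Ioi p) : Set (Fin (n+1))) := by
    rintro a _ b _ h
    exact congrArg Prod.snd h
  rw [invNum, hset, Finset.card_union_of_disjoint hdisj,
    Finset.card_image_of_injOn hinj1, Finset.card_image_of_injOn hinj2,
    Fin.card_Ioi]
  have h1 : n + 1 - 1 - (p : ℕ) = n - p := by omega
  rw [h1]
  rfl

open Equiv Fin
variable {n : ℕ}

theorem pv_lt {π : Equiv.Perm (Fin n)} {i : ℕ} (h : i < n) :
    pv π i = (π ⟨i, h⟩ : ℕ) := dif_pos h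

theorem pv_ge {π : Equiv.Perm (Fin n)} {i : ℕ} (h : ¬ i < n) :
    pv π i = n + i := dif_neg h

theorem pv_lt_n {π : Equiv.Perm (Fin n)} {i : ℕ} (h : i < n) : pv π i < n := by
  rw [pv_lt h]; exact (π ⟨i, h⟩).isLt

theorem desF_succ_lt {π : Equiv.Perm (Fin n)} {i : ℕ} (h : i ∈ desF π) : i + 1 < n := by
  rw [desF, Finset.mem_filter, Finset.mem_range] at h
  by_contra hc
  have h1 := pv_lt_n (π := π) h.1
  have h2 := pv_ge (π := π) hc
  omega

theorem LD_le_iff {π : Equiv.Perm (Fin n)} {p : ℕ} :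
    LD π ≤ p ↔ ∀ i ∈ desF π, i + 1 ≤ p := Finset.sup_le_iff

theorem LD_lt (π : Equiv.Perm (Fin n)) (hn : 0 < n) : LD π < n := by
  have : LD π ≤ n - 1 := LD_le_iff.mpr (fun i hi => by have := desF_succ_lt hi; omega)
  omega

/-- `π` is increasing from position `p` on. -/
def IncF {n : ℕ} (π : Equiv.Perm (Fin n)) (p : ℕ) : Prop :=
  ∀ i j : Fin n, p ≤ (i : ℕ) → i < j → π i < π j

theorem incF_iff_LD_le {π : Equiv.Perm (Fin n)} {p : ℕ} : IncF π p ↔ LD π ≤ p := by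
  constructor
  · intro hI
    rw [LD_le_iff]
    intro i hi
    have hi1 := desF_succ_lt hi
    rw [desF, Finset.mem_filter, Finset.mem_range] at hi
    by_contra hc
    have := hI ⟨i, hi.1⟩ ⟨i + 1, hi1⟩ (by simpa using by omega) (by simp [Fin.lt_def])
    rw [Fin.lt_def] at this
    rw [pv_lt hi1, pv_lt hi.1] at hi
    omega
  · intro hL
    have hmono : StrictMono (fun k => pv π (p + k)) := by
      apply strictMono_nat_of_lt_succ
      intro k
      set i := p + k with hik
      show pv π i < pv π (i + 1)
      rcases Nat.lt_or_ge i n with hin | hin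
      · rcases Nat.lt_or_ge (i + 1) n with hin1 | hin1
        · rcases Nat.lt_trichotomy (pv π (i + 1)) (pv π i) with h | h | h
          · exfalso
            have hmem : i ∈ desF π := by
              rw [desF, Finset.mem_filter, Finset.mem_range]; exact ⟨hin, h⟩
            have := LD_le_iff.mp hL i hmem
            omega
          · exfalso
            rw [pv_lt hin1, pv_lt hin] at h
            have : (⟨i + 1, hin1⟩ : Fin n) = ⟨i, hin⟩ :=
              π.injective (Fin.val_injective h)
            simpa using this
          · exact h
        · have h1 := pv_lt_n (π := π) hin
          have h2 := pv_ge (π := π) (i := i + 1) (by omega)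
          omega
      · have h1 := pv_ge (π := π) (show ¬ i < n by omega)
        have h2 := pv_ge (π := π) (show ¬ i + 1 < n by omega)
        omega
    intro i j hpi hij
    rw [Fin.lt_def] at hij ⊢
    have h1 : pv π ((i : ℕ)) < pv π ((j : ℕ)) := by
      have e1 : (i : ℕ) = p + ((i : ℕ) - p) := by omega
      have e2 : (j : ℕ) = p + ((j : ℕ) - p) := by omega
      rw [e1, e2]
      exact hmono (by omega)
    rwa [pv_lt i.isLt, pv_lt j.isLt, Fin.eta, Fin.eta] at h1

theorem avoids_ins {π' : Equiv.Perm (Fin n)} {p : Fin (n + 1)} :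
    Avoids321 (ins π' p) ↔ Avoids321 π' ∧ IncF π' (p : ℕ) := by
  constructor
  · intro hA
    constructor
    · rintro ⟨i, j, k, hij, hjk, h1, h2⟩
      refine hA ⟨p.succAbove i, p.succAbove j, p.succAbove k, ?_, ?_, ?_, ?_⟩
      · exact Fin.succAbove_lt_succAbove_iff.mpr hij
      · exact Fin.succAbove_lt_succAbove_iff.mpr hjk
      · rw [ins_succAbove, ins_succAbove]; exact Fin.castSucc_lt_castSucc_iff.mpr h1
      · rw [ins_succAbove, ins_succAbove]; exact Fin.castSucc_lt_castSucc_iff.mpr h2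
    · intro i j hpi hij
      by_contra hc
      have hne : π' i ≠ π' j := fun h => absurd (π'.injective h) (ne_of_lt hij)
      have hji : π' j < π' i := lt_of_le_of_ne (not_lt.mp hc) hne.symm
      refine hA ⟨p, p.succAbove i, p.succAbove j, ?_, ?_, ?_, ?_⟩
      · rw [Fin.lt_succAbove_iff_le_castSucc, Fin.le_def]; simpa using hpi
      · exact Fin.succAbove_lt_succAbove_iff.mpr hij
      · rw [ins_succAbove, ins_succAbove]; exact Fin.castSucc_lt_castSucc_iff.mpr hji
      · rw [ins_succAbove, ins_self]; exact Fin.castSucc_lt_last _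
  · rintro ⟨hA', hI⟩ ⟨a, b, c, hab, hbc, h1, h2⟩
    have hbp : b ≠ p := by
      rintro rfl
      rw [ins_self] at h2
      exact absurd h2 (not_lt.mpr (Fin.le_last _))
    have hcp : c ≠ p := by
      rintro rfl
      rw [ins_self] at h1
      exact absurd h1 (not_lt.mpr (Fin.le_last _))
    obtain ⟨j, rfl⟩ := Fin.exists_succAbove_eq hbp
    obtain ⟨k, rfl⟩ := Fin.exists_succAbove_eq hcp
    rw [ins_succAbove, ins_succAbove, Fin.castSucc_lt_castSucc_iff] at h1
    rcases eq_or_ne p a with rfl | hap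
    · have hpj : (p : ℕ) ≤ (j : ℕ) := by
        rw [Fin.lt_succAbove_iff_le_castSucc, Fin.le_def] at hab
        simpa using hab
      have hjk : j < k := Fin.succAbove_lt_succAbove_iff.mp hbc
      exact absurd (hI j k hpj hjk) (not_lt.mpr h1.le)
    · obtain ⟨i, rfl⟩ := Fin.exists_succAbove_eq hap.symm
      rw [ins_succAbove, ins_succAbove, Fin.castSucc_lt_castSucc_iff] at h2
      exact hA' ⟨i, j, k, Fin.succAbove_lt_succAbove_iff.mp hab,
        Fin.succAbove_lt_succAbove_iff.mp hbc, h1, h2⟩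


theorem pv_ins_lt {π' : Equiv.Perm (Fin n)} {p : Fin (n + 1)} {i : ℕ} (h : i < (p : ℕ)) :
    pv (ins π' p) i = pv π' i := by
  have hp : (p : ℕ) < n + 1 := p.isLt
  have hi1 : i < n + 1 := by omega
  have hin : i < n := by omega
  have he : (⟨i, hi1⟩ : Fin (n + 1)) = p.succAbove ⟨i, hin⟩ := by
    rw [Fin.succAbove_of_castSucc_lt _ _ (by rw [Fin.lt_def]; exact h)]
    rfl
  rw [pv_lt hi1, pv_lt hin, he, ins_succAbove]
  rfl

theorem pv_ins_self {π' : Equiv.Perm (Fin n)} {p : Fin (n + 1)} :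
    pv (ins π' p) (p : ℕ) = n := by
  have hp : (p : ℕ) < n + 1 := p.isLt
  rw [pv_lt hp, show (⟨(p : ℕ), hp⟩ : Fin (n + 1)) = p from Fin.eta p hp, ins_self]
  rfl

theorem pv_ins_gt {π' : Equiv.Perm (Fin n)} {p : Fin (n + 1)} {i : ℕ}
    (h : (p : ℕ) < i) (hi1 : i < n + 1) :
    pv (ins π' p) i = pv π' (i - 1) := by
  have hin : i - 1 < n := by omega
  have he : (⟨i, hi1⟩ : Fin (n + 1)) = p.succAbove ⟨i - 1, hin⟩ := by
    rw [Fin.succAbove_of_le_castSucc _ _ (by rw [Fin.le_def]; simpa using by omega)]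
    simp [Fin.succ]
    omega
  rw [pv_lt hi1, pv_lt hin, he, ins_succAbove]
  rfl

theorem LD_ins_last (π' : Equiv.Perm (Fin n)) : LD (ins π' (Fin.last n)) = LD π' := by
  have hd : desF (ins π' (Fin.last n)) = desF π' := by
    ext i
    simp only [desF, Finset.mem_filter, Finset.mem_range]
    constructor
    · rintro ⟨hi, hlt⟩
      rcases Nat.lt_or_ge (i + 1) n with h1 | h1
      · rw [pv_ins_lt (by simp; omega), pv_ins_lt (by simp; omega)] at hlt
        exact ⟨by omega, hlt⟩
      · exfalso
        have hpvi : pv (ins π' (Fin.last n)) i ≤ n := by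
          rcases Nat.lt_or_ge i n with h2 | h2
          · rw [pv_ins_lt (i := i) (by simpa using h2)]
            exact (pv_lt_n h2).le
          · have h3 : i = n := by omega
            have : pv (ins π' (Fin.last n)) i
                = pv (ins π' (Fin.last n)) ((Fin.last n : Fin (n + 1)) : ℕ) := by
              rw [Fin.val_last]; exact congrArg _ h3
            rw [this, pv_ins_self]
        have hpvi1 : n ≤ pv (ins π' (Fin.last n)) (i + 1) := by
          rcases Nat.lt_or_ge (i + 1) (n + 1) with h2 | h2
          · have h3 : i + 1 = n := by omega
            rw [show i + 1 = ((Fin.last n : Fin (n + 1)) : ℕ) by simp [h3], pv_ins_self]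
          · rw [pv_ge (by omega)]
            omega
        omega
    · rintro ⟨hi, hlt⟩
      have h1 : i + 1 < n := by
        by_contra hc
        have := pv_lt_n (π := π') hi
        have := pv_ge (π := π') (i := i + 1) (by omega)
        omega
      refine ⟨by omega, ?_⟩
      rw [pv_ins_lt (by simp; omega), pv_ins_lt (by simp; omega)]
      exact hlt
  rw [LD, LD, hd]

theorem LD_ins_lt {π' : Equiv.Perm (Fin n)} {p : Fin (n + 1)} (hP : (p : ℕ) < n)
    (hI : IncF π' (p : ℕ)) : LD (ins π' p) = (p : ℕ) + 1 := by
  apply le_antisymm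
  · rw [LD_le_iff]
    intro i hi
    have hi1 := desF_succ_lt hi
    rw [desF, Finset.mem_filter, Finset.mem_range] at hi
    by_contra hc
    push_neg at hc
    have hpi : (p : ℕ) < i := by omega
    have hlt := hi.2
    rw [pv_ins_gt hpi (by omega), pv_ins_gt (by omega) (by omega)] at hlt
    -- hlt : pv π' (i + 1 - 1) < pv π' (i - 1)
    have e1 : i + 1 - 1 = i := by omega
    rw [e1, pv_lt (show i < n by omega), pv_lt (show i - 1 < n by omega)] at hlt
    have := hI ⟨i - 1, by omega⟩ ⟨i, by omega⟩ (by simpa using by omega)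
      (by rw [Fin.lt_def]; simp; omega)
    rw [Fin.lt_def] at this
    omega
  · apply Finset.le_sup (f := (· + 1))
    rw [desF, Finset.mem_filter, Finset.mem_range]
    refine ⟨by omega, ?_⟩
    rw [pv_ins_self, pv_ins_gt (by omega) (by omega)]
    have e1 : (p : ℕ) + 1 - 1 = (p : ℕ) := by omega
    rw [e1]
    exact pv_lt_n hP


theorem LD_le_n (π : Equiv.Perm (Fin n)) : LD π ≤ n :=
  LD_le_iff.mpr (fun i hi => (desF_succ_lt hi).le)

def G (n l : ℕ) : ℤ := ∑ π ∈ (Tset n).filter (fun π => LD π = l), sgn π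

def H (n l : ℕ) : ℤ := ∑ π ∈ (Tset n).filter (fun π => LD π < l), sgn π

theorem sgn_ins (π' : Equiv.Perm (Fin n)) (p : Fin (n + 1)) :
    sgn (ins π' p) = (-1) ^ (n - (p : ℕ)) * sgn π' := by
  rw [sgn, sgn, invNum_ins, pow_add, mul_comm]

theorem mem_Tset_iff {π : Equiv.Perm (Fin n)} : π ∈ Tset n ↔ Avoids321 π := by
  simp [Tset]

theorem sum_ins (F : Equiv.Perm (Fin (n + 1)) → ℤ) :
    ∑ π ∈ Tset (n + 1), F π =
      ∑ π' ∈ Tset n, ∑ p ∈ Finset.univ.filter (fun p : Fin (n + 1) => LD π' ≤ (p : ℕ)),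
        F (ins π' p) := by
  rw [Finset.sum_sigma']
  symm
  apply Finset.sum_nbij' (fun q => ins q.1 q.2)
    (fun π => ⟨rem π, π.symm (Fin.last n)⟩)
  · rintro ⟨π', p⟩ hq
    rw [Finset.mem_sigma, Finset.mem_filter] at hq
    rw [mem_Tset_iff]
    exact avoids_ins.mpr ⟨mem_Tset_iff.mp hq.1, incF_iff_LD_le.mpr hq.2.2⟩
  · intro π hπ
    rw [Finset.mem_sigma, Finset.mem_filter]
    have hins := ins_rem π
    have hA : Avoids321 (ins (rem π) (π.symm (Fin.last n))) := by
      rw [hins]; exact mem_Tset_iff.mp hπ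
    obtain ⟨h1, h2⟩ := avoids_ins.mp hA
    exact ⟨mem_Tset_iff.mpr h1, Finset.mem_univ _, incF_iff_LD_le.mp h2⟩
  · rintro ⟨π', p⟩ _
    dsimp only
    rw [rem_ins, ins_symm_last]
  · intro π _
    exact ins_rem π
  · intro q _
    rfl

theorem inner_sum (π' : Equiv.Perm (Fin n)) (l : ℕ) :
    ∑ p ∈ Finset.univ.filter (fun p : Fin (n + 1) => LD π' ≤ (p : ℕ)),
        (if LD (ins π' p) = l then sgn (ins π' p) else 0) =
      (if LD π' = l then sgn π' else 0) +
        (if 1 ≤ l ∧ l ≤ n ∧ LD π' ≤ l - 1 then (-1) ^ (n + 1 - l) * sgn π' else 0) := by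
  have hlast : Fin.last n ∈
      Finset.univ.filter (fun p : Fin (n + 1) => LD π' ≤ (p : ℕ)) := by
    rw [Finset.mem_filter]
    exact ⟨Finset.mem_univ _, by simpa using LD_le_n π'⟩
  have hlastval : (if LD (ins π' (Fin.last n)) = l then sgn (ins π' (Fin.last n)) else 0)
      = (if LD π' = l then sgn π' else 0) := by
    rw [LD_ins_last, sgn_ins]
    simp
  rw [← Finset.sum_erase_add _ _ hlast, hlastval, add_comm]
  congr 1
  · -- erase sum
    by_cases hl : 1 ≤ l ∧ l ≤ n ∧ LD π' ≤ l - 1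
    · obtain ⟨h1, h2, h3⟩ := hl
      have hp0 : l - 1 < n + 1 := by omega
      rw [if_pos (show 1 ≤ l ∧ l ≤ n ∧ LD π' ≤ l - 1 from ⟨h1, h2, h3⟩)]
      have hval : (if LD (ins π' (⟨l - 1, hp0⟩ : Fin (n + 1))) = l
          then sgn (ins π' (⟨l - 1, hp0⟩ : Fin (n + 1))) else 0)
          = (-1 : ℤ) ^ (n + 1 - l) * sgn π' := by
        have hLD : LD (ins π' (⟨l - 1, hp0⟩ : Fin (n + 1))) = (l - 1) + 1 := by
          apply LD_ins_lt (by simpa using by omega)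
          apply incF_iff_LD_le.mpr
          simpa using h3
        rw [hLD, if_pos (by omega), sgn_ins]
        have he : n - ((⟨l - 1, hp0⟩ : Fin (n + 1)) : ℕ) = n + 1 - l := by
          simp
          omega
        rw [he]
      rw [← hval]
      apply Finset.sum_eq_single_of_mem (⟨l - 1, hp0⟩ : Fin (n + 1))
      · rw [Finset.mem_erase, Finset.mem_filter]
        refine ⟨?_, Finset.mem_univ _, by simpa using h3⟩
        rw [Ne, Fin.ext_iff, Fin.val_last]
        simp
        omega
      · intro b hb hbne
        rw [Finset.mem_erase, Finset.mem_filter] at hb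
        have hbn : (b : ℕ) < n := by
          have := hb.1
          rw [Ne, Fin.ext_iff, Fin.val_last] at this
          have := b.isLt
          omega
        have hLD : LD (ins π' b) = (b : ℕ) + 1 :=
          LD_ins_lt hbn (incF_iff_LD_le.mpr hb.2.2)
        rw [hLD, if_neg]
        intro hc
        apply hbne
        rw [Fin.ext_iff]
        simp
        omega
    · rw [if_neg hl]
      apply Finset.sum_eq_zero
      intro p hp
      rw [Finset.mem_erase, Finset.mem_filter] at hp
      have hbn : (p : ℕ) < n := by
        have := hp.1
        rw [Ne, Fin.ext_iff, Fin.val_last] at this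
        have := p.isLt
        omega
      have hLD : LD (ins π' p) = (p : ℕ) + 1 :=
        LD_ins_lt hbn (incF_iff_LD_le.mpr hp.2.2)
      rw [hLD, if_neg]
      intro hc
      exact hl ⟨by omega, by omega, by omega⟩

theorem G_rec (n l : ℕ) :
    G (n + 1) l = G n l +
      (if 1 ≤ l ∧ l ≤ n then (-1 : ℤ) ^ (n + 1 - l) * H n l else 0) := by
  rw [G, Finset.sum_filter, sum_ins (F := fun π => if LD π = l then sgn π else 0)]
  rw [Finset.sum_congr rfl (fun π' _ => inner_sum π' l), Finset.sum_add_distrib]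
  congr 1
  · rw [G, Finset.sum_filter]
  · by_cases hl : 1 ≤ l ∧ l ≤ n
    · rw [if_pos hl, H, Finset.mul_sum, Finset.sum_filter]
      apply Finset.sum_congr rfl
      intro π' _
      have : (1 ≤ l ∧ l ≤ n ∧ LD π' ≤ l - 1) ↔ (LD π' < l) := by
        constructor
        · rintro ⟨_, _, h⟩; omega
        · intro h; exact ⟨hl.1, hl.2, by omega⟩
      rw [if_congr this rfl rfl]
    · rw [if_neg hl]
      apply Finset.sum_eq_zero
      intro π' _
      rw [if_neg]
      intro hc
      exact hl ⟨hc.1, hc.2.1⟩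

theorem H_zero (n : ℕ) : H n 0 = 0 := by
  rw [H]
  apply Finset.sum_eq_zero
  intro π hπ
  rw [Finset.mem_filter] at hπ
  omega

theorem H_succ (n l : ℕ) : H n (l + 1) = H n l + G n l := by
  rw [H, H, G, Finset.sum_filter, Finset.sum_filter, Finset.sum_filter,
    ← Finset.sum_add_distrib]
  apply Finset.sum_congr rfl
  intro π _
  by_cases h1 : LD π < l
  · rw [if_pos (by omega), if_pos h1, if_neg (by omega), add_zero]
  · by_cases h2 : LD π = l
    · rw [if_pos (by omega), if_neg h1, if_pos h2, zero_add]
    · rw [if_neg (by omega), if_neg h1, if_neg h2, add_zero]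

theorem sum_sgn_eq_H (n : ℕ) (hn : 0 < n) : ∑ π ∈ Tset n, sgn π = H n n := by
  rw [H, Finset.filter_true_of_mem]
  intro π _
  exact LD_lt π hn

/-- ballot-type numbers -/
def bb : ℕ → ℕ → ℤ
  | 0, k => if k = 0 then 1 else 0
  | m + 1, k => if k ≤ m then ∑ j ∈ Finset.range (k + 1), bb m j else 0

theorem bb_zero (m : ℕ) : bb m 0 = 1 := by
  induction m with
  | zero => rfl
  | succ m ih => rw [bb, if_pos (Nat.zero_le m)]; simpa using ih

theorem bb_eq_zero {m k : ℕ} (h : m ≤ k) (hm : 1 ≤ m) : bb m k = 0 := by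
  rcases m with _ | m
  · omega
  · rw [bb, if_neg (by omega)]

theorem bb_succ {m k : ℕ} (h : k ≤ m) :
    bb (m + 1) k = ∑ j ∈ Finset.range (k + 1), bb m j := by
  rw [bb, if_pos h]

theorem bb_succ_succ {m k : ℕ} (h : k + 1 ≤ m) :
    bb (m + 1) (k + 1) = bb (m + 1) k + bb m (k + 1) := by
  rw [bb_succ h, bb_succ (by omega), Finset.sum_range_succ]


theorem np (a : ℕ) : ((-1 : ℤ)) ^ a = if a % 2 = 0 then 1 else -1 := by
  rcases Nat.even_or_odd a with h | h
  · rw [Even.neg_one_pow h, if_pos (Nat.even_iff.mp h)]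
  · rw [Odd.neg_one_pow h, if_neg (by rw [Nat.odd_iff] at h; omega)]

theorem G_one (l : ℕ) : G 1 l = if l = 0 then 1 else 0 := by
  have hT : Tset 1 = {1} := by decide
  have hLD : LD (1 : Equiv.Perm (Fin 1)) = 0 := by decide
  have hsgn : sgn (1 : Equiv.Perm (Fin 1)) = 1 := by decide
  rw [G, hT, Finset.filter_singleton, hLD]
  by_cases h : l = 0
  · rw [if_pos (by omega), if_pos h, Finset.sum_singleton, hsgn]
  · rw [if_neg (by omega), if_neg h, Finset.sum_empty]

theorem H_of_G {n : ℕ} {g : ℕ → ℤ} (hg : ∀ l, G n l = g l) (l : ℕ) :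
    H n l = ∑ x ∈ Finset.range l, g x := by
  induction l with
  | zero => rw [H_zero, Finset.range_zero, Finset.sum_empty]
  | succ l ih => rw [H_succ, ih, Finset.sum_range_succ, hg l]

theorem H_odd {m : ℕ} (hodd : ∀ l, G (2 * m + 1) l = if l % 2 = 0 then bb m (l / 2) else 0)
    (l : ℕ) : H (2 * m + 1) l = ∑ k ∈ Finset.range ((l + 1) / 2), bb m k := by
  induction l with
  | zero => rw [H_zero]; rfl
  | succ l ih =>
      rw [H_succ, ih, hodd l]
      by_cases h : l % 2 = 0
      · rw [if_pos h]
        have e1 : (l + 1 + 1) / 2 = (l + 1) / 2 + 1 := by omega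
        have e2 : (l + 1) / 2 = l / 2 := by omega
        rw [e1, Finset.sum_range_succ, e2]
      · rw [if_neg h, add_zero]
        have e1 : (l + 1 + 1) / 2 = (l + 1) / 2 := by omega
        rw [e1]

theorem H_even {m : ℕ} (heven : ∀ l, G (2 * m + 2) l = (-1 : ℤ) ^ l * bb (m + 1) (l / 2))
    (l : ℕ) : H (2 * m + 2) l = if l % 2 = 1 then bb (m + 1) (l / 2) else 0 := by
  induction l with
  | zero => rw [H_zero, if_neg (by omega)]
  | succ l ih =>
      rw [H_succ, ih, heven l, np l]
      by_cases h : l % 2 = 0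
      · rw [if_neg (by omega), if_pos h, if_pos (by omega), zero_add, one_mul]
        have e : (l + 1) / 2 = l / 2 := by omega
        rw [e]
      · rw [if_pos (by omega), if_neg h, if_neg (by omega)]
        ring

theorem bb_small_zero {m k : ℕ} (h : m ≤ k) (h2 : 1 ≤ k) : bb m k = 0 := by
  rcases m with _ | m
  · rw [bb, if_neg (by omega)]
  · rw [bb, if_neg (by omega)]

theorem G_even {m : ℕ}
    (hodd : ∀ l, G (2 * m + 1) l = if l % 2 = 0 then bb m (l / 2) else 0) :
    ∀ l, G (2 * m + 2) l = (-1 : ℤ) ^ l * bb (m + 1) (l / 2) := by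
  intro l
  have hrec := G_rec (2 * m + 1) l
  have e0 : 2 * m + 1 + 1 = 2 * m + 2 := by omega
  rw [e0] at hrec
  rw [hrec, hodd l]
  by_cases h1 : 1 ≤ l ∧ l ≤ 2 * m + 1
  · rw [if_pos h1, H_odd hodd l, np (2 * m + 1 + 1 - l), np l]
    by_cases h2 : l % 2 = 0
    · rw [if_pos h2, if_pos h2, if_pos (by omega), one_mul, one_mul]
      have hk : (l + 1) / 2 = l / 2 := by omega
      have hkm : l / 2 ≤ m := by omega
      rw [hk, bb_succ hkm, Finset.sum_range_succ]
      ring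
    · rw [if_neg h2, if_neg h2, if_neg (by omega)]
      have hk : (l + 1) / 2 = l / 2 + 1 := by omega
      have hkm : l / 2 ≤ m := by omega
      rw [hk, bb_succ hkm]
      ring
  · rw [if_neg h1, add_zero, np l]
    rcases Nat.eq_zero_or_pos l with rfl | hl
    · rw [if_pos (by omega), if_pos (by omega), one_mul]
      show bb m 0 = bb (m + 1) 0
      rw [bb_zero, bb_zero]
    · have hll : 2 * m + 2 ≤ l := by omega
      have hz : bb (m + 1) (l / 2) = 0 := bb_small_zero (by omega) (by omega)
      by_cases h2 : l % 2 = 0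
      · rw [if_pos h2, if_pos h2, hz, one_mul]
        exact bb_small_zero (by omega) (by omega)
      · rw [if_neg h2, if_neg h2, hz]
        ring

theorem G_odd_all (m : ℕ) :
    ∀ l, G (2 * m + 1) l = if l % 2 = 0 then bb m (l / 2) else 0 := by
  induction m with
  | zero =>
      intro l
      have e0 : 2 * 0 + 1 = 1 := by omega
      rw [e0, G_one l]
      by_cases h : l = 0
      · rw [if_pos h, if_pos (by omega), h]
        show (1 : ℤ) = bb 0 0
        rfl
      · rw [if_neg h]
        by_cases h2 : l % 2 = 0
        · rw [if_pos h2]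
          exact (bb_small_zero (by omega) (by omega)).symm
        · rw [if_neg h2]
  | succ m ih =>
      have heven := G_even ih
      intro l
      have hrec := G_rec (2 * m + 2) l
      have e0 : 2 * m + 2 + 1 = 2 * (m + 1) + 1 := by omega
      rw [e0] at hrec
      rw [hrec, heven l, np l]
      by_cases h1 : 1 ≤ l ∧ l ≤ 2 * m + 2
      · rw [if_pos h1, H_even heven l, np (2 * (m + 1) + 1 - l)]
        by_cases h2 : l % 2 = 0
        · rw [if_pos h2, if_pos h2, if_neg (by omega), if_neg (by omega), one_mul,
            mul_zero, add_zero]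
        · rw [if_neg h2, if_neg h2, if_pos (by omega), if_pos (by omega), one_mul]
          ring
      · rw [if_neg h1, add_zero]
        rcases Nat.eq_zero_or_pos l with rfl | hl
        · rw [if_pos (by omega), if_pos (by omega), one_mul]
        · have hll : 2 * m + 3 ≤ l := by omega
          have hz : bb (m + 1) (l / 2) = 0 := bb_small_zero (by omega) (by omega)
          by_cases h2 : l % 2 = 0
          · rw [if_pos h2, if_pos h2, hz, one_mul]
          · rw [if_neg h2, if_neg h2, hz]
            ring


theorem bb_closed : ∀ m, ∀ k ≤ m + 1,
    bb (m + 1) k = (Nat.choose (m + k) k : ℤ) - Nat.choose (m + k) (m + 1) := by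
  intro m
  induction m with
  | zero =>
      intro k hk
      interval_cases k
      · rw [bb_zero]
        simp
      · rw [bb_small_zero le_rfl le_rfl]
        simp
  | succ m ih =>
      intro k hk
      induction k with
      | zero =>
          rw [bb_zero]
          rw [Nat.add_zero, Nat.choose_zero_right, Nat.choose_eq_zero_of_lt (by omega)]
          simp
      | succ k ihk =>
          rcases Nat.eq_or_lt_of_le hk with he | hlt
          · have : m + 1 + 1 ≤ k + 1 := by omega
            rw [bb_small_zero this (by omega)]
            have e : m + 1 + (k + 1) = m + k + 2 := by omega
            rw [e, show k + 1 = m + 2 by omega]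
            simp
          · have hk1 : k + 1 ≤ m + 1 := by omega
            rw [bb_succ_succ hk1, ihk (by omega), ih (k + 1) hk1]
            have e1 : m + 1 + (k + 1) = m + k + 1 + 1 := by omega
            have e2 : m + 1 + k = m + k + 1 := by omega
            have e3 : m + (k + 1) = m + k + 1 := by omega
            rw [e1, e2, e3]
            rw [Nat.choose_succ_succ' (m + k + 1) k, Nat.choose_succ_succ' (m + k + 1) (m + 1)]
            push_cast
            ring

theorem catalan_eq_bb (m : ℕ) : (catalan m : ℤ) = bb (m + 1) m := by
  have h1 : bb (m + 1) m = (Nat.choose (2 * m) m : ℤ) - Nat.choose (2 * m) (m + 1) := by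
    rw [bb_closed m m (by omega)]
    have e : m + m = 2 * m := by omega
    rw [e]
  have h2 : Nat.choose (2 * m) (m + 1) * (m + 1) = Nat.choose (2 * m) m * m := by
    have := Nat.choose_succ_right_eq (2 * m) m
    have e : 2 * m - m = m := by omega
    rwa [e] at this
  have h3 : (m + 1) * catalan m = Nat.choose (2 * m) m := by
    rw [succ_mul_catalan_eq_centralBinom, Nat.centralBinom_eq_two_mul_choose]
  have key : ((m : ℤ) + 1) * (catalan m : ℤ) = ((m : ℤ) + 1) * bb (m + 1) m := by
    rw [h1]
    have h2' : ((Nat.choose (2 * m) (m + 1) : ℤ)) * (m + 1) = (Nat.choose (2 * m) m : ℤ) * m := by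
      exact_mod_cast congrArg (fun x : ℕ => (x : ℤ)) h2
    have h3' : ((m : ℤ) + 1) * (catalan m : ℤ) = (Nat.choose (2 * m) m : ℤ) := by
      exact_mod_cast congrArg (fun x : ℕ => (x : ℤ)) h3
    rw [h3']
    linarith
  exact mul_left_cancel₀ (by positivity) key

theorem sum_sgn_odd (n : ℕ) : ∑ π ∈ Tset (2 * n + 1), sgn π = catalan n := by
  rw [sum_sgn_eq_H (2 * n + 1) (by omega), H_odd (G_odd_all n) (2 * n + 1)]
  have e : (2 * n + 1 + 1) / 2 = n + 1 := by omega
  rw [e, ← bb_succ (le_refl n), ← catalan_eq_bb]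

theorem sum_sgn_split (N : ℕ) :
    ∑ π ∈ Tset N, sgn π =
      (((Tset N).filter (fun π => Even (invNum π))).card : ℤ) -
        ((Tset N).filter (fun π => Odd (invNum π))).card := by
  rw [← Finset.sum_filter_add_sum_filter_not (Tset N) (fun π => Even (invNum π))]
  have h1 : ∑ π ∈ (Tset N).filter (fun π => Even (invNum π)), sgn π =
      (((Tset N).filter (fun π => Even (invNum π))).card : ℤ) := by
    rw [Finset.card_eq_sum_ones, Nat.cast_sum]
    apply Finset.sum_congr rfl
    intro π hπ
    rw [Finset.mem_filter] at hπ
    rw [sgn, Even.neg_one_pow hπ.2]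
    simp
  have h2 : ∑ π ∈ (Tset N).filter (fun π => ¬ Even (invNum π)), sgn π =
      -(((Tset N).filter (fun π => Odd (invNum π))).card : ℤ) := by
    have he : (Tset N).filter (fun π => ¬ Even (invNum π)) =
        (Tset N).filter (fun π => Odd (invNum π)) := by
      apply Finset.filter_congr
      intro π _
      rw [Nat.even_iff, Nat.odd_iff]
      omega
    rw [he, Finset.card_eq_sum_ones, Nat.cast_sum, ← Finset.sum_neg_distrib]
    apply Finset.sum_congr rfl
    intro π hπ
    rw [Finset.mem_filter] at hπ
    rw [sgn, Odd.neg_one_pow hπ.2]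
    simp
  rw [h1, h2]
  ring

end SB

theorem sign_balance_odd (n : ℕ) :
    (((Tset (2 * n + 1)).filter (fun π => Even (invNum π))).card : ℤ) -
        ((Tset (2 * n + 1)).filter (fun π => Odd (invNum π))).card = catalan n ∧
      (n + 1) * catalan n = (2 * n).choose n := by
  constructor
  · rw [← SB.sum_sgn_split (2 * n + 1), SB.sum_sgn_odd]
  · rw [succ_mul_catalan_eq_centralBinom, Nat.centralBinom_eq_two_mul_choose]
end

section
/- Let π ∈ T_{n-1} (a 321-avoiding permutation of order n-1) and let π̄ be obtained by inserting the digit n between the k-th and (k+1)-st places of π (0 ≤ k ≤ n-1). Then π̄ is 321-avoiding if and only if ldes(π) ≤ k. -/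
open Finset

private lemma exists_descent0 {m : ℕ} (π : Equiv.Perm (Fin m)) (a b : ℕ)
    (ha : a < m) (hb : b < m) (hab : a < b)
    (hv : (π ⟨b, hb⟩ : ℕ) < π ⟨a, ha⟩) :
    ∃ d, a ≤ d ∧ d + 1 ≤ b ∧ ∃ (hd : d < m) (hd1 : d + 1 < m),
      (π ⟨d + 1, hd1⟩ : ℕ) < π ⟨d, hd⟩ := by
  by_contra h
  push_neg at h
  have mono : ∀ x (hx : x < m), a ≤ x → x ≤ b → (π ⟨a, ha⟩ : ℕ) ≤ π ⟨x, hx⟩ := by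
    intro x
    induction x with
    | zero =>
        intro hx h1 h2
        have : a = 0 := by omega
        subst this
        exact le_rfl
    | succ y ih =>
        intro hx h1 h2
        rcases Nat.lt_or_ge a (y + 1) with h' | h'
        · have hy : y < m := by omega
          have step := h y (by omega) (by omega) hy hx
          exact le_trans (ih hy (by omega) (by omega)) step
        · have : a = y + 1 := by omega
          subst this
          exact le_rfl
  have := mono b hb (le_of_lt hab) le_rfl
  omega

theorem insert_avoids_iff (m k : ℕ) (hk : k ≤ m)
    (π : Equiv.Perm (Fin m)) (hπ : Avoids321 π)
    (πb : Equiv.Perm (Fin (m + 1)))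
    (h1 : ∀ i, 1 ≤ i → i ≤ k → pval πb i = pval π i)
    (h2 : pval πb (k + 1) = m + 1)
    (h3 : ∀ i, k + 2 ≤ i → i ≤ m + 1 → pval πb i = pval π (i - 1)) :
    Avoids321 πb ↔ ldes π ≤ k := by
  -- value lemmas
  have hπval : ∀ (a : ℕ) (ha : a < m), pval π (a + 1) = (π ⟨a, ha⟩ : ℕ) + 1 := by
    intro a ha
    simp [pval, ha]
  have hbval : ∀ (a : ℕ) (ha : a < m + 1), pval πb (a + 1) = (πb ⟨a, ha⟩ : ℕ) + 1 := by
    intro a ha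
    simp [pval, ha]
  have hb1 : ∀ (j : ℕ) (hj : j < m + 1) (hj' : j < m), j < k →
      (πb ⟨j, hj⟩ : ℕ) = π ⟨j, hj'⟩ := by
    intro j hj hj' hjk
    have := h1 (j + 1) (by omega) (by omega)
    rw [hπval j hj', hbval j hj] at this
    omega
  have hb2 : ∀ (h : k < m + 1), (πb ⟨k, h⟩ : ℕ) = m := by
    intro h
    have := h2
    rw [hbval k h] at this
    omega
  have hb3 : ∀ (j : ℕ) (hj : j < m + 1) (hj' : j - 1 < m), k < j →
      (πb ⟨j, hj⟩ : ℕ) = π ⟨j - 1, hj'⟩ := by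
    intro j hj hj' hkj
    have := h3 (j + 1) (by omega) (by omega)
    rw [hbval j hj] at this
    rw [Nat.add_sub_cancel] at this
    obtain ⟨e, rfl⟩ : ∃ e, j = e + 1 := ⟨j - 1, by omega⟩
    rw [hπval e (by omega)] at this
    have : (πb ⟨e + 1, hj⟩ : ℕ) = π ⟨e, by omega⟩ := by omega
    simpa using this
  constructor
  · intro hav
    by_contra hld
    push_neg at hld
    obtain ⟨d, hd, hkd⟩ : ∃ d ∈ desSet π, k < d := by
      by_contra hc
      push_neg at hc
      have : ldes π ≤ k := Finset.sup_le fun d hd => hc d hd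
      omega
    simp only [desSet, Finset.mem_filter, Finset.mem_Icc] at hd
    obtain ⟨⟨hd1, hd2⟩, hdes⟩ := hd
    obtain ⟨e, rfl⟩ : ∃ e, d = e + 1 := ⟨d - 1, by omega⟩
    have he1 : e + 1 < m := by omega
    have he0 : e < m := by omega
    rw [hπval (e + 1) he1, hπval e he0] at hdes
    apply hav
    refine ⟨⟨k, by omega⟩, ⟨e + 1, by omega⟩, ⟨e + 2, by omega⟩,
      Fin.mk_lt_mk.mpr (by omega), Fin.mk_lt_mk.mpr (by omega), ?_, ?_⟩
    · rw [Fin.lt_def]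
      have v1 : (πb ⟨e + 1, by omega⟩ : ℕ) = π ⟨e, he0⟩ := by
        have := hb3 (e + 1) (by omega) (by omega) (by omega)
        simpa using this
      have v2 : (πb ⟨e + 2, by omega⟩ : ℕ) = π ⟨e + 1, he1⟩ := by
        have := hb3 (e + 2) (by omega) (by omega) (by omega)
        simpa using this
      omega
    · rw [Fin.lt_def]
      have v1 : (πb ⟨e + 1, by omega⟩ : ℕ) = π ⟨e, he0⟩ := by
        have := hb3 (e + 1) (by omega) (by omega) (by omega)
        simpa using this
      have v0 : (πb ⟨k, by omega⟩ : ℕ) = m := hb2 (by omega)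
      have : (π ⟨e, he0⟩ : ℕ) < m := (π ⟨e, he0⟩).isLt
      omega
  · intro hld
    rintro ⟨i, j, l, hij, hjl, hv1, hv2⟩
    rw [Fin.lt_def] at hij hjl hv1 hv2
    have hdle : ∀ d ∈ desSet π, d ≤ k := fun d hd => le_trans (Finset.le_sup (f := id) hd) hld
    have hnoinv : ∀ a b (ha : a < m) (hb : b < m), k ≤ a → a < b →
        (π ⟨a, ha⟩ : ℕ) ≤ π ⟨b, hb⟩ := by
      intro a b ha hb hka hab
      by_contra hc
      push_neg at hc
      obtain ⟨d, had, hdb, hdm, hdm1, hdes⟩ := exists_descent0 π a b ha hb hab hc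
      have hmem : d + 1 ∈ desSet π := by
        simp only [desSet, Finset.mem_filter, Finset.mem_Icc]
        refine ⟨⟨by omega, by omega⟩, ?_⟩
        rw [hπval (d + 1) hdm1, hπval d hdm]
        omega
      have := hdle _ hmem
      omega
    have hmax : ∀ (x : Fin (m + 1)), (x : ℕ) ≠ k → (πb x : ℕ) < m := by
      intro x hx
      have hle : (πb x : ℕ) ≤ m := Nat.lt_succ_iff.mp (πb x).isLt
      rcases Nat.lt_or_ge ((πb x : ℕ)) m with h | h
      · exact h
      · exfalso
        have hxm : (πb x : ℕ) = m := by omega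
        have : x = ⟨k, by omega⟩ := by
          apply πb.injective
          apply Fin.ext
          rw [hb2 (by omega)]
          exact hxm
        exact hx (by rw [this])
    have himg : ∀ (x : Fin (m + 1)), (x : ℕ) ≠ k → ∃ (y : ℕ) (hy : y < m),
        (πb x : ℕ) = π ⟨y, hy⟩ ∧
        (((x : ℕ) < k ∧ y = (x : ℕ)) ∨ (k < (x : ℕ) ∧ y + 1 = (x : ℕ))) := by
      intro x hx
      rcases Nat.lt_or_ge (x : ℕ) k with h | h
      · refine ⟨(x : ℕ), by omega, ?_, Or.inl ⟨h, rfl⟩⟩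
        have := hb1 (x : ℕ) x.isLt (by omega) h
        simpa using this
      · have hkx : k < (x : ℕ) := by omega
        refine ⟨(x : ℕ) - 1, by omega, ?_, Or.inr ⟨hkx, by omega⟩⟩
        have := hb3 (x : ℕ) x.isLt (by omega) hkx
        simpa using this
    by_cases hjk : (j : ℕ) = k
    · have : (πb j : ℕ) = m := by
        have : j = (⟨k, by omega⟩ : Fin (m + 1)) := Fin.ext hjk
        rw [this, hb2 (by omega)]
      have hi : (πb i : ℕ) < m := hmax i (by omega)
      omega
    by_cases hlk : (l : ℕ) = k
    · have : (πb l : ℕ) = m := by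
        have : l = (⟨k, by omega⟩ : Fin (m + 1)) := Fin.ext hlk
        rw [this, hb2 (by omega)]
      have hj' : (πb j : ℕ) < m := hmax j hjk
      omega
    by_cases hik : (i : ℕ) = k
    · -- j, l > k
      have hkj : k < (j : ℕ) := by omega
      have hkl : k < (l : ℕ) := by omega
      obtain ⟨yj, hyj, hvj, hcj⟩ := himg j hjk
      obtain ⟨yl, hyl, hvl, hcl⟩ := himg l hlk
      have hylt : yj < yl := by omega
      have hky : k ≤ yj := by omega
      have := hnoinv yj yl hyj hyl hky hylt
      omega
    · obtain ⟨yi, hyi, hvi, hci⟩ := himg i hik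
      obtain ⟨yj, hyj, hvj, hcj⟩ := himg j hjk
      obtain ⟨yl, hyl, hvl, hcl⟩ := himg l hlk
      apply hπ
      refine ⟨⟨yi, hyi⟩, ⟨yj, hyj⟩, ⟨yl, hyl⟩,
        Fin.mk_lt_mk.mpr (by omega), Fin.mk_lt_mk.mpr (by omega), ?_, ?_⟩
      · rw [Fin.lt_def]; omega
      · rw [Fin.lt_def]; omega
end

section
/- Let π ∈ T_{n-1} and π̄ ∈ T_n be obtained by inserting n between positions k and k+1 (ldes(π) ≤ k ≤ n-1). Then inv(π̄) = inv(π) + (n-1-k), lind(π̄) = k+1, and ldes(π̄) = k+1 if k < n-1 while ldes(π̄) = ldes(π) if k = n-1. -/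
open Finset

theorem insert_statistics (m k : ℕ) (hk : k ≤ m)
    (π : Equiv.Perm (Fin m)) (hπ : Avoids321 π) (hld : ldes π ≤ k)
    (πb : Equiv.Perm (Fin (m + 1)))
    (h1 : ∀ i, 1 ≤ i → i ≤ k → pval πb i = pval π i)
    (h2 : pval πb (k + 1) = m + 1)
    (h3 : ∀ i, k + 2 ≤ i → i ≤ m + 1 → pval πb i = pval π (i - 1)) :
    invNum πb = invNum π + (m - k) ∧
      lind πb = k + 1 ∧
      (k < m → ldes πb = k + 1) ∧
      (k = m → ldes πb = ldes π) := by
  have hkm : k < m + 1 := Nat.lt_succ_of_le hk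
  set kk : Fin (m + 1) := ⟨k, hkm⟩ with hkkdef
  -- basic value facts
  have fC : (πb kk : ℕ) = m := by
    have h := h2
    unfold pval at h
    simp only [Nat.add_sub_cancel] at h
    rw [dif_pos hkm] at h
    exact Nat.add_right_cancel h
  have f2 : πb kk = Fin.last m := Fin.ext fC
  have fA : ∀ (j : ℕ) (hj : j < m + 1), j < k → ∀ (hj' : j < m),
      (πb ⟨j, hj⟩ : ℕ) = (π ⟨j, hj'⟩ : ℕ) := by
    intro j hj hjk hj'
    have h := h1 (j + 1) (by omega) (by omega)
    unfold pval at h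
    simp only [Nat.add_sub_cancel] at h
    rw [dif_pos hj, dif_pos hj'] at h
    omega
  have fB : ∀ (j : ℕ) (hj : j < m + 1), k < j → ∀ (hj' : j - 1 < m),
      (πb ⟨j, hj⟩ : ℕ) = (π ⟨j - 1, hj'⟩ : ℕ) := by
    intro j hj hjk hj'
    have h := h3 (j + 1) (by omega) (by omega)
    unfold pval at h
    simp only [Nat.add_sub_cancel] at h
    rw [dif_pos hj, dif_pos hj'] at h
    omega
  have factS : ∀ i : Fin m, (πb (kk.succAbove i) : ℕ) = (π i : ℕ) := by
    intro i
    rcases Nat.lt_or_ge (i : ℕ) k with h | h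
    · have hc : i.castSucc < kk := by
        simp only [Fin.lt_def, Fin.coe_castSucc]; exact h
      rw [Fin.succAbove_of_castSucc_lt _ _ hc]
      exact fA i (by omega) h i.isLt
    · have hc : kk ≤ i.castSucc := by
        simp only [Fin.le_def, Fin.coe_castSucc]; exact h
      rw [Fin.succAbove_of_le_castSucc _ _ hc]
      exact fB (i + 1) (by omega) (by omega) i.isLt
  have pvle : ∀ j : ℕ, pval π j ≤ m := by
    intro j; unfold pval; split
    · next h => have := (π ⟨j - 1, h⟩).isLt; omega
    · omega
  -- inversion count
  have hinv : invNum πb = invNum π + (m - k) := by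
    classical
    set S := (Finset.univ.filter
      (fun q : Fin (m + 1) × Fin (m + 1) => q.1 < q.2 ∧ πb q.2 < πb q.1)) with hS
    have hsplit := Finset.card_filter_add_card_filter_not
      (s := S) (fun q : Fin (m + 1) × Fin (m + 1) => q.1 = kk)
    have hSdef : invNum πb = S.card := rfl
    have c1 : (S.filter (fun q => q.1 = kk)).card = m - k := by
      have hb : (S.filter (fun q => q.1 = kk)).card = (Finset.Ioi kk).card := by
        apply Finset.card_bij (fun q _ => q.2)
        · intro a ha
          simp only [hS, Finset.mem_filter, Finset.mem_univ, true_and] at ha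
          exact Finset.mem_Ioi.mpr (ha.2 ▸ ha.1.1)
        · intro a ha b hb hab
          simp only [hS, Finset.mem_filter, Finset.mem_univ, true_and] at ha hb
          exact Prod.ext (ha.2.trans hb.2.symm) hab
        · intro b hbm
          have hkb : kk < b := Finset.mem_Ioi.mp hbm
          refine ⟨(kk, b), ?_, rfl⟩
          simp only [hS, Finset.mem_filter, Finset.mem_univ, true_and]
          refine ⟨⟨hkb, ?_⟩, trivial⟩
          rw [f2]
          refine lt_of_le_of_ne (Fin.le_last _) (fun he => ?_)
          have : b = kk := πb.injective (he.trans f2.symm)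
          exact absurd (this ▸ hkb) (lt_irrefl _)
      rw [hb, Fin.card_Ioi]
      show m + 1 - 1 - k = m - k
      omega
    have c2 : (S.filter (fun q => ¬ q.1 = kk)).card = invNum π := by
      symm
      unfold invNum
      apply Finset.card_bij (fun (q : Fin m × Fin m) _ => (kk.succAbove q.1, kk.succAbove q.2))
      · intro a ha
        simp only [Finset.mem_filter, Finset.mem_univ, true_and] at ha
        simp only [hS, Finset.mem_filter, Finset.mem_univ, true_and]
        refine ⟨⟨Fin.succAbove_lt_succAbove_iff.mpr ha.1, ?_⟩, Fin.succAbove_ne kk a.1⟩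
        rw [Fin.lt_def, factS, factS]
        exact Fin.lt_def.mp ha.2
      · intro a ha b hb hab
        have h1' := congrArg Prod.fst hab
        have h2' := congrArg Prod.snd hab
        simp only at h1' h2'
        exact Prod.ext (Fin.succAbove_right_injective h1')
          (Fin.succAbove_right_injective h2')
      · intro b hbm
        simp only [hS, Finset.mem_filter, Finset.mem_univ, true_and] at hbm
        obtain ⟨⟨hlt, hvlt⟩, hne1⟩ := hbm
        have hne2 : b.2 ≠ kk := by
          intro he
          rw [he, f2] at hvlt
          exact absurd (Fin.le_last (πb b.1)) (not_le_of_gt hvlt)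
        obtain ⟨a1, ha1⟩ := Fin.exists_succAbove_eq hne1
        obtain ⟨a2, ha2⟩ := Fin.exists_succAbove_eq hne2
        refine ⟨(a1, a2), ?_, by simp [ha1, ha2]⟩
        simp only [Finset.mem_filter, Finset.mem_univ, true_and]
        constructor
        · rw [← Fin.succAbove_lt_succAbove_iff (p := kk), ha1, ha2]; exact hlt
        · rw [Fin.lt_def, ← factS a1, ← factS a2, ha1, ha2]
          exact Fin.lt_def.mp hvlt
    omega
  -- lind
  have hlind : lind πb = k + 1 := by
    have hmm : m + 1 - 1 < m + 1 := by omega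
    unfold lind pval
    rw [dif_pos hmm]
    have he : πb.symm ⟨m + 1 - 1, hmm⟩ = kk := by
      rw [Equiv.symm_apply_eq, f2]
      rfl
    rw [he]
  -- ldes, case k < m
  have hcase1 : k < m → ldes πb = k + 1 := by
    intro hkm'
    unfold ldes
    apply le_antisymm
    · apply Finset.sup_le
      intro x hx
      simp only [desSet, Finset.mem_filter, Finset.mem_Icc] at hx
      obtain ⟨⟨hx1, hx2⟩, hdes⟩ := hx
      simp only [id]
      by_contra hgt
      push_neg at hgt
      have e1 : pval πb x = pval π (x - 1) := h3 x (by omega) (by omega)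
      have e2 : pval πb (x + 1) = pval π x := h3 (x + 1) (by omega) (by omega)
      rw [e1, e2] at hdes
      have hm : x - 1 ∈ desSet π := by
        simp only [desSet, Finset.mem_filter, Finset.mem_Icc]
        refine ⟨⟨by omega, by omega⟩, ?_⟩
        rw [show x - 1 + 1 = x by omega]
        exact hdes
      have hle : x - 1 ≤ ldes π := Finset.le_sup (f := id) hm
      omega
    · have hmem : k + 1 ∈ desSet πb := by
        simp only [desSet, Finset.mem_filter, Finset.mem_Icc]
        refine ⟨⟨by omega, by omega⟩, ?_⟩
        have e1 : pval πb (k + 2) = pval π (k + 1) := h3 (k + 2) (by omega) (by omega)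
        rw [e1, h2]
        have := pvle (k + 1)
        omega
      exact Finset.le_sup (f := id) hmem
  -- ldes, case k = m
  have hcase2 : k = m → ldes πb = ldes π := by
    intro hke
    have hds : desSet πb = desSet π := by
      ext x
      simp only [desSet, Finset.mem_filter, Finset.mem_Icc]
      constructor
      · rintro ⟨⟨hx1, hx2⟩, hdes⟩
        have hxm : x ≠ m := by
          intro hxe
          rw [hxe] at hdes
          have q1 : pval πb (m + 1) = m + 1 := hke ▸ h2
          have q2 : pval πb m = pval π m := h1 m (by omega) (by omega)
          have := pvle m
          omega
        have e1 : pval πb x = pval π x := h1 x hx1 (by omega)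
        have e2 : pval πb (x + 1) = pval π (x + 1) := h1 (x + 1) (by omega) (by omega)
        rw [e1, e2] at hdes
        exact ⟨⟨hx1, by omega⟩, hdes⟩
      · rintro ⟨⟨hx1, hx2⟩, hdes⟩
        have hm1 : 1 ≤ m := by omega
        have e1 : pval πb x = pval π x := h1 x hx1 (by omega)
        have e2 : pval πb (x + 1) = pval π (x + 1) := h1 (x + 1) (by omega) (by omega)
        rw [e1, e2]
        exact ⟨⟨hx1, by omega⟩, hdes⟩
    unfold ldes
    rw [hds]
  exact ⟨hinv, hlind, hcase1, hcase2⟩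
end
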